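/- arXiv:1105.0675 — 9 statements merged into one kernel-verified Lean document; each statement's English description precedes it below -/
import Mathlib

section
/- Let P and P₀ be orthogonal projectors on a finite-dimensional complex Hilbert space. Then ‖P - P₀‖ < 1 if and only if no nonzero vector in the range of P is orthogonal to the range of P₀ and no nonzero vector in the range of P₀ is orthogonal to the range of P. -/
open ContinuousLinearMap
open scoped ComplexInnerProductSpace

theorem stmt0 {H : Type*} [NormedAddCommGroup H] [InnerProductSpace ℂ H]
    [FiniteDimensional ℂ H]
    (P P₀ : H →L[ℂ] H)
    (hP : ContinuousLinearMap.adjoint P = P) (hPidem : P ∘L P = P)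
    (hP₀ : ContinuousLinearMap.adjoint P₀ = P₀) (hP₀idem : P₀ ∘L P₀ = P₀) :
    ‖P - P₀‖ < 1 ↔
      ((∀ v : H, P v = v → v ≠ 0 → P₀ v ≠ 0) ∧
       (∀ v : H, P₀ v = v → v ≠ 0 → P v ≠ 0)) := by
  set A : H →L[ℂ] H := P - P₀ with hA
  set B : H →L[ℂ] H := 1 - P - P₀ with hB
  have hPm : P * P = P := hPidem
  have hP₀m : P₀ * P₀ = P₀ := hP₀idem
  have hAsa : ContinuousLinearMap.adjoint A = A := by
    rw [hA, map_sub, hP, hP₀]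
  have hBsa : ContinuousLinearMap.adjoint B = B := by
    rw [hB, map_sub, map_sub, hP, hP₀, ← ContinuousLinearMap.star_eq_adjoint, star_one]
  have key2 : A ∘L A + B ∘L B = 1 := by
    show A * A + B * B = 1
    rw [hA, hB]
    simp only [sub_mul, mul_sub, one_mul, mul_one, hPm, hP₀m]
    abel
  have key : ∀ x : H, ‖A x‖ ^ 2 + ‖B x‖ ^ 2 = ‖x‖ ^ 2 := by
    intro x
    have h1 := ContinuousLinearMap.apply_norm_sq_eq_inner_adjoint_left A x
    have h2 := ContinuousLinearMap.apply_norm_sq_eq_inner_adjoint_left B x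
    rw [hAsa] at h1
    rw [hBsa] at h2
    rw [h1, h2, ← map_add, ← inner_add_left]
    have hx : (A ∘L A) x + (B ∘L B) x = x := by
      rw [← ContinuousLinearMap.add_apply, key2]; rfl
    rw [hx, inner_self_eq_norm_sq]
  have hle : ‖A‖ ≤ 1 := by
    refine ContinuousLinearMap.opNorm_le_bound _ zero_le_one ?_
    intro x
    rw [one_mul]
    have := key x
    nlinarith [norm_nonneg (A x), norm_nonneg x, sq_nonneg ‖B x‖]
  constructor
  · rintro hlt
    constructor
    · intro v hv hv0 hcon
      have : A v = v := by simp [hA, ContinuousLinearMap.sub_apply, hv, hcon]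
      have h1 : ‖v‖ ≤ ‖A‖ * ‖v‖ := by
        conv_lhs => rw [← this]
        exact A.le_opNorm v
      have hvpos : 0 < ‖v‖ := norm_pos_iff.mpr hv0
      nlinarith
    · intro v hv hv0 hcon
      have : A v = -v := by simp [hA, ContinuousLinearMap.sub_apply, hv, hcon]
      have h1 : ‖v‖ ≤ ‖A‖ * ‖v‖ := by
        have h' := A.le_opNorm v
        rwa [this, norm_neg] at h'
      have hvpos : 0 < ‖v‖ := norm_pos_iff.mpr hv0
      nlinarith
  · rintro ⟨h1, h2⟩
    rcases lt_or_eq_of_le hle with h | h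
    · exact h
    · exfalso
      -- norm is 1, attained on sphere
      have hAne : A ≠ 0 := by
        intro h0
        rw [h0, norm_zero] at h
        norm_num at h
      have : ∃ x : H, A x ≠ 0 := by
        by_contra hc
        push_neg at hc
        exact hAne (ContinuousLinearMap.ext fun x => by simp [hc x])
      obtain ⟨z, hz⟩ := this
      have hzne : z ≠ 0 := fun h' => hz (by simp [h'])
      have : Nontrivial H := ⟨z, 0, hzne⟩
      obtain ⟨w, hw⟩ := exists_norm_eq H (zero_le_one (α := ℝ))
      have hsph : (Metric.sphere (0 : H) 1).Nonempty := ⟨w, by simpa using hw⟩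
      obtain ⟨x₀, hx₀s, hmax⟩ := (isCompact_sphere (0 : H) 1).exists_isMaxOn hsph
        (A.continuous.norm.continuousOn)
      have hx₀ : ‖x₀‖ = 1 := by simpa using hx₀s
      have hub : ‖A‖ ≤ ‖A x₀‖ := by
        refine ContinuousLinearMap.opNorm_le_bound _ (norm_nonneg _) ?_
        intro y
        rcases eq_or_ne y 0 with rfl | hy
        · simp
        · have hyn : ‖y‖ ≠ 0 := norm_ne_zero_iff.mpr hy
          have hmem : (‖y‖⁻¹ • y) ∈ Metric.sphere (0 : H) 1 := by
            simp [norm_smul, abs_of_nonneg (norm_nonneg y), inv_mul_cancel₀ hyn]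
          have hle' : ‖A (‖y‖⁻¹ • y)‖ ≤ ‖A x₀‖ := hmax hmem
          rw [A.map_smul_of_tower, norm_smul, norm_inv, norm_norm] at hle'
          calc ‖A y‖ = ‖y‖ * (‖y‖⁻¹ * ‖A y‖) := by field_simp
            _ ≤ ‖y‖ * ‖A x₀‖ := mul_le_mul_of_nonneg_left hle' (norm_nonneg y)
            _ = ‖A x₀‖ * ‖y‖ := mul_comm _ _
      have hAx₀le : ‖A x₀‖ ≤ 1 := by
        have h' := A.le_opNorm x₀
        rwa [h, hx₀, mul_one] at h'
      have hAx₀ : ‖A x₀‖ = 1 := le_antisymm hAx₀le (by rw [h] at hub; exact hub)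
      have hBx₀ : B x₀ = 0 := by
        have := key x₀
        rw [hAx₀, hx₀] at this
        have : ‖B x₀‖ = 0 := by nlinarith [norm_nonneg (B x₀)]
        exact norm_eq_zero.mp this
      have hsum : P x₀ + P₀ x₀ = x₀ := by
        have : x₀ - P x₀ - P₀ x₀ = 0 := by
          simpa [hB, ContinuousLinearMap.sub_apply] using hBx₀
        linear_combination (norm := abel) -this
      have hx₀ne : x₀ ≠ 0 := fun h' => by simp [h'] at hx₀
      have hPP : ∀ v, P (P v) = P v := fun v => by
        rw [← ContinuousLinearMap.comp_apply, hPidem]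
      have hP₀P₀ : ∀ v, P₀ (P₀ v) = P₀ v := fun v => by
        rw [← ContinuousLinearMap.comp_apply, hP₀idem]
      have hQPx : P₀ (P x₀) = 0 := by
        have := congrArg (fun v => P₀ v) hsum
        simp only [map_add, hP₀P₀] at this
        linear_combination (norm := abel) this
      rcases eq_or_ne (P x₀) 0 with hu | hu
      · have hx₀fix : P₀ x₀ = x₀ := by
          rw [← hsum, hu, zero_add]
          exact (hP₀P₀ x₀)
        exact h2 x₀ hx₀fix hx₀ne hu
      · exact h1 (P x₀) (hPP x₀) hu hQPx
end

section
/- Let ψ and φ be unit vectors in ℂ² with real positive inner product ⟨ψ, φ⟩ = cos θ for some θ ∈ [0, π/2). Let R_ψ = I - 2|ψ⟩⟨ψ| and R_φ = I - 2|φ⟩⟨φ| be the corresponding reflections. Then the double reflection R_φ R_ψ is unitary and has no eigenvalue on the negative real axis. -/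
open ContinuousLinearMap
open scoped ComplexInnerProductSpace

lemma refl_adjoint_eq (v : EuclideanSpace ℂ (Fin 2))
    (R : EuclideanSpace ℂ (Fin 2) →L[ℂ] EuclideanSpace ℂ (Fin 2))
    (hR : ∀ x, R x = x - (2 : ℂ) • (⟪v, x⟫ • v)) :
    ContinuousLinearMap.adjoint R = R := by
  symm
  rw [ContinuousLinearMap.eq_adjoint_iff]
  intro x y
  rw [hR, hR]
  simp only [inner_sub_left, inner_sub_right, inner_smul_left, inner_smul_right,
    inner_smul_left, map_ofNat]
  ring_nf
  rw [inner_conj_symm]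
  ring

lemma refl_sq (v : EuclideanSpace ℂ (Fin 2)) (hv : ‖v‖ = 1)
    (R : EuclideanSpace ℂ (Fin 2) →L[ℂ] EuclideanSpace ℂ (Fin 2))
    (hR : ∀ x, R x = x - (2 : ℂ) • (⟪v, x⟫ • v)) :
    ∀ x, R (R x) = x := by
  have hvv : ⟪v, v⟫ = 1 := by
    rw [inner_self_eq_norm_sq_to_K, hv]; norm_num
  intro x
  rw [hR, hR]
  simp only [inner_sub_right, inner_smul_right, hvv, mul_one]
  module

theorem stmt3
    (ψ φ : EuclideanSpace ℂ (Fin 2)) (hψ : ‖ψ‖ = 1) (hφ : ‖φ‖ = 1)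
    (θ : ℝ) (hθ : 0 ≤ θ ∧ θ < Real.pi / 2)
    (hinner : ⟪ψ, φ⟫ = (Real.cos θ : ℂ))
    (Rψ Rφ : EuclideanSpace ℂ (Fin 2) →L[ℂ] EuclideanSpace ℂ (Fin 2))
    (hRψ : ∀ x, Rψ x = x - (2 : ℂ) • (⟪ψ, x⟫ • ψ))
    (hRφ : ∀ x, Rφ x = x - (2 : ℂ) • (⟪φ, x⟫ • φ)) :
    (ContinuousLinearMap.adjoint (Rφ ∘L Rψ) ∘L (Rφ ∘L Rψ) = 1 ∧
     (Rφ ∘L Rψ) ∘L ContinuousLinearMap.adjoint (Rφ ∘L Rψ) = 1) ∧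
    ∀ (lam : ℂ) (x : EuclideanSpace ℂ (Fin 2)), x ≠ 0 → (Rφ ∘L Rψ) x = lam • x →
      ¬ (lam.im = 0 ∧ lam.re < 0) := by
  have hψψ : ⟪ψ, ψ⟫ = 1 := by rw [inner_self_eq_norm_sq_to_K, hψ]; norm_num
  have hφφ : ⟪φ, φ⟫ = 1 := by rw [inner_self_eq_norm_sq_to_K, hφ]; norm_num
  have haψ := refl_adjoint_eq ψ Rψ hRψ
  have haφ := refl_adjoint_eq φ Rφ hRφ
  have iψ := refl_sq ψ hψ Rψ hRψ
  have iφ := refl_sq φ hφ Rφ hRφ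
  have hadj : ContinuousLinearMap.adjoint (Rφ ∘L Rψ) = Rψ ∘L Rφ := by
    rw [ContinuousLinearMap.adjoint_comp, haψ, haφ]
  have h1 : ContinuousLinearMap.adjoint (Rφ ∘L Rψ) ∘L (Rφ ∘L Rψ) = 1 := by
    rw [hadj]
    apply ContinuousLinearMap.ext
    intro x
    simp [ContinuousLinearMap.comp_apply, iφ, iψ]
  have h2 : (Rφ ∘L Rψ) ∘L ContinuousLinearMap.adjoint (Rφ ∘L Rψ) = 1 := by
    rw [hadj]
    apply ContinuousLinearMap.ext
    intro x
    simp [ContinuousLinearMap.comp_apply, iφ, iψ]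
  refine ⟨⟨h1, h2⟩, ?_⟩
  rintro lam x hx hev ⟨him, hre⟩
  -- the map preserves norms
  have hnorm : ‖(Rφ ∘L Rψ) x‖ = ‖x‖ := by
    have key : ⟪(Rφ ∘L Rψ) x, (Rφ ∘L Rψ) x⟫ = ⟪x, x⟫ := by
      rw [← ContinuousLinearMap.adjoint_inner_right]
      congr 1
      have := congrArg (fun T => T x) h1
      simpa using this
    rw [inner_self_eq_norm_sq_to_K, inner_self_eq_norm_sq_to_K] at key
    have key2 : ‖(Rφ ∘L Rψ) x‖ ^ 2 = ‖x‖ ^ 2 := by exact_mod_cast key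
    nlinarith [norm_nonneg ((Rφ ∘L Rψ) x), norm_nonneg x]
  have hxne : ‖x‖ ≠ 0 := norm_ne_zero_iff.mpr hx
  have habs : ‖lam‖ = 1 := by
    rw [hev, norm_smul] at hnorm
    have := mul_right_cancel₀ hxne (hnorm.trans (one_mul ‖x‖).symm)
    exact this
  have hlamre : lam = (lam.re : ℂ) := by
    apply Complex.ext <;> simp [him]
  have hlam : lam = -1 := by
    rw [hlamre, Complex.norm_real, Real.norm_eq_abs, abs_of_neg hre] at habs
    rw [hlamre]
    have : lam.re = -1 := by linarith
    rw [this]; norm_num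
  -- so (Rφ ∘L Rψ) x = -x
  have heq : Rψ x = - Rφ x := by
    have h3 : Rφ ((Rφ ∘L Rψ) x) = Rφ (lam • x) := congrArg Rφ hev
    simp only [ContinuousLinearMap.comp_apply] at h3
    rw [iφ, hlam] at h3
    rw [h3]
    simp [map_smul]
  -- expand
  set a := ⟪ψ, x⟫ with ha
  set b := ⟪φ, x⟫ with hb
  have hx2 : x = a • ψ + b • φ := by
    have h0 := heq
    rw [hRψ, hRφ] at h0
    have h2x : (2:ℂ) • x = (2:ℂ) • (a • ψ) + (2:ℂ) • (b • φ) := by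
      linear_combination (norm := module) h0
    have h2x' : (2:ℂ) • x = (2:ℂ) • (a • ψ + b • φ) := by
      rw [smul_add]; exact h2x
    exact smul_right_injective _ (two_ne_zero (α := ℂ)) h2x'
  have hc : (Real.cos θ : ℂ) ≠ 0 := by
    have : 0 < Real.cos θ := Real.cos_pos_of_mem_Ioo ⟨by linarith [Real.pi_pos, hθ.1], hθ.2⟩
    exact_mod_cast this.ne'
  have hφψ : ⟪φ, ψ⟫ = (Real.cos θ : ℂ) := by
    rw [← inner_conj_symm, hinner, Complex.conj_ofReal]
  have e1 : a = a + b * (Real.cos θ : ℂ) := by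
    conv_lhs => rw [ha, hx2]
    rw [inner_add_right, inner_smul_right, inner_smul_right, hψψ, hinner]
    ring
  have e2 : b = a * (Real.cos θ : ℂ) + b := by
    conv_lhs => rw [hb, hx2]
    rw [inner_add_right, inner_smul_right, inner_smul_right, hφφ, hφψ]
    ring
  have hb0 : b = 0 := by
    have : b * (Real.cos θ : ℂ) = 0 := by linear_combination e1.symm
    exact (mul_eq_zero.mp this).resolve_right hc
  have ha0 : a = 0 := by
    have : a * (Real.cos θ : ℂ) = 0 := by linear_combination e2.symm
    exact (mul_eq_zero.mp this).resolve_right hc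
  apply hx
  rw [hx2, ha0, hb0]
  simp
end

section
/- Let ψ and φ be non-orthogonal unit vectors in a finite-dimensional complex Hilbert space with ⟨ψ, φ⟩ real and positive. Then there exists a unitary U with U² = R_φ R_ψ (where R_v = I - 2|v⟩⟨v|) and U ψ = φ. -/
open ContinuousLinearMap
open scoped ComplexInnerProductSpace

noncomputable section

variable {H : Type*} [NormedAddCommGroup H] [InnerProductSpace ℂ H]

/-- Reflection through the hyperplane orthogonal to `v`. -/
noncomputable def myRefl (v : H) : H →L[ℂ] H :=
  ContinuousLinearMap.id ℂ H - (2 : ℂ) • ((innerSL ℂ v).smulRight v)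

lemma myRefl_apply (v x : H) : myRefl v x = x - (2 : ℂ) • ((⟪v, x⟫ : ℂ) • v) := by
  simp [myRefl, smul_smul]

lemma myRefl_symm (v x y : H) : (⟪myRefl v x, y⟫ : ℂ) = ⟪x, myRefl v y⟫ := by
  simp only [myRefl_apply, inner_sub_left, inner_sub_right, inner_smul_left,
    inner_smul_right, map_mul, map_ofNat, inner_conj_symm]
  ring

lemma myRefl_neg (v : H) : myRefl (-v) = myRefl v := by
  ext x
  simp [myRefl_apply]

lemma myRefl_myRefl (v : H) (hv : ‖v‖ = 1) (x : H) : myRefl v (myRefl v x) = x := by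
  have hvv : (⟪v, v⟫ : ℂ) = 1 := by
    rw [inner_self_eq_norm_sq_to_K, hv]; norm_num
  simp only [myRefl_apply, inner_sub_right, inner_smul_right, hvv, mul_one, smul_smul]
  module

lemma myRefl_conj (χ v : H) (hχ : ‖χ‖ = 1) (x : H) :
    myRefl χ (myRefl v (myRefl χ x)) = myRefl (myRefl χ v) x := by
  have h1 : myRefl v (myRefl χ x)
      = myRefl χ x - (2 : ℂ) • ((⟪v, myRefl χ x⟫ : ℂ) • v) := myRefl_apply _ _
  rw [h1, map_sub, map_smul, map_smul, myRefl_myRefl χ hχ,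
    myRefl_apply (myRefl χ v) x, ← myRefl_symm]

lemma myRefl_adjoint [FiniteDimensional ℂ H] (v : H) :
    ContinuousLinearMap.adjoint (myRefl v) = myRefl v := by
  symm
  rw [eq_adjoint_iff]
  intro x y
  exact myRefl_symm v x y

end

theorem stmt4 {H : Type*} [NormedAddCommGroup H] [InnerProductSpace ℂ H]
    [FiniteDimensional ℂ H]
    (ψ φ : H) (hψ : ‖ψ‖ = 1) (hφ : ‖φ‖ = 1)
    (hre : 0 < (⟪ψ, φ⟫ : ℂ).re) (him : (⟪ψ, φ⟫ : ℂ).im = 0)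
    (Rψ Rφ : H →L[ℂ] H)
    (hRψ : ∀ x, Rψ x = x - (2 : ℂ) • ((⟪ψ, x⟫ : ℂ) • ψ))
    (hRφ : ∀ x, Rφ x = x - (2 : ℂ) • ((⟪φ, x⟫ : ℂ) • φ)) :
    ∃ U : H →L[ℂ] H,
      ContinuousLinearMap.adjoint U ∘L U = 1 ∧
      U ∘L ContinuousLinearMap.adjoint U = 1 ∧
      U ∘L U = Rφ ∘L Rψ ∧
      U ψ = φ := by
  -- identify Rψ, Rφ with our reflections
  have hRψ' : Rψ = myRefl ψ := by ext x; rw [hRψ, myRefl_apply]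
  have hRφ' : Rφ = myRefl φ := by ext x; rw [hRφ, myRefl_apply]
  -- the inner product is a positive real c
  set c : ℝ := (⟪ψ, φ⟫ : ℂ).re with hcdef
  have hc : (⟪ψ, φ⟫ : ℂ) = (c : ℂ) := by
    apply Complex.ext <;> simp [him, hcdef]
  have hφψ : (⟪φ, ψ⟫ : ℂ) = (c : ℂ) := by
    rw [← inner_conj_symm, hc]; simp
  have hψψ : (⟪ψ, ψ⟫ : ℂ) = 1 := by
    rw [inner_self_eq_norm_sq_to_K, hψ]; norm_num
  -- the bisector
  set n : ℝ := ‖ψ + φ‖ with hndef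
  have hn2 : n ^ 2 = 2 + 2 * c := by
    rw [hndef, @norm_add_sq ℂ]
    simp only [RCLike.re_to_complex, hψ, hφ, hcdef]; ring
  have hnpos : 0 < n := by
    have hnn : (0:ℝ) ≤ n := norm_nonneg _
    nlinarith [hn2, hre, hnn]
  have hnne : (n : ℂ) ≠ 0 := by
    exact_mod_cast ne_of_gt hnpos
  set χ : H := ((n : ℂ))⁻¹ • (ψ + φ) with hχdef
  have hχnorm : ‖χ‖ = 1 := by
    rw [hχdef, norm_smul, ← hndef]
    simp only [norm_inv, Complex.norm_real, Real.norm_eq_abs,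
      abs_of_pos hnpos]
    field_simp
  -- key computation: reflecting ψ in the bisector gives -φ
  have hkey : myRefl χ ψ = -φ := by
    have hinner : (⟪χ, ψ⟫ : ℂ) = (n : ℂ)⁻¹ * (1 + c) := by
      rw [hχdef, inner_smul_left, inner_add_left, hψψ, hφψ]
      simp
    rw [myRefl_apply, hinner, hχdef, smul_smul, smul_smul]
    have hscal : (2 : ℂ) * ((n : ℂ)⁻¹ * (1 + c)) * (n : ℂ)⁻¹ = 1 := by
      have hn2' : ((n : ℝ) : ℂ) ^ 2 = 2 + 2 * (c : ℂ) := by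
        exact_mod_cast congrArg (fun r : ℝ => (r : ℂ)) hn2
      field_simp
      linear_combination -hn2'
    rw [hscal, one_smul]
    abel
  have hψrefl : myRefl ψ ψ = -ψ := by
    rw [myRefl_apply, hψψ]
    module
  refine ⟨myRefl χ ∘L myRefl ψ, ?_, ?_, ?_, ?_⟩
  · rw [adjoint_comp, myRefl_adjoint, myRefl_adjoint]
    ext x
    simp only [comp_apply, one_apply, myRefl_myRefl χ hχnorm, myRefl_myRefl ψ hψ]
    rfl
  · rw [adjoint_comp, myRefl_adjoint, myRefl_adjoint]
    ext x
    simp only [comp_apply, one_apply, myRefl_myRefl χ hχnorm, myRefl_myRefl ψ hψ]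
    rfl
  · rw [hRφ', hRψ']
    ext x
    show myRefl χ (myRefl ψ (myRefl χ (myRefl ψ x))) = myRefl φ (myRefl ψ x)
    rw [myRefl_conj χ ψ hχnorm (myRefl ψ x), hkey, myRefl_neg]
  · show myRefl χ (myRefl ψ ψ) = φ
    rw [hψrefl, map_neg, hkey, neg_neg]
end

section
/- Let ψ, φ be non-orthogonal unit vectors in a finite-dimensional complex Hilbert space with ⟨ψ, φ⟩ > 0 real. Then there exists an anti-Hermitian operator S with ‖S‖ < π/2 such that exp(S) ψ = φ, and S satisfies PSP = 0, P₀SP₀ = 0, (I-P)S(I-P) = 0, (I-P₀)S(I-P₀) = 0, where P = |ψ⟩⟨ψ| and P₀ = |φ⟩⟨φ|. -/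
open ContinuousLinearMap
open scoped ComplexInnerProductSpace

noncomputable def Sop {H : Type*} [NormedAddCommGroup H] [InnerProductSpace ℂ H]
    (ψ χ : H) (θ : ℝ) : H →L[ℂ] H :=
  (θ : ℂ) • ((innerSL ℂ ψ).smulRight χ - (innerSL ℂ χ).smulRight ψ)

lemma Sop_apply {H : Type*} [NormedAddCommGroup H] [InnerProductSpace ℂ H]
    (ψ χ : H) (θ : ℝ) (x : H) :
    Sop ψ χ θ x = (θ : ℂ) • ((⟪ψ, x⟫ : ℂ) • χ - (⟪χ, x⟫ : ℂ) • ψ) := by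
  simp [Sop]

lemma Sop_adjoint {H : Type*} [NormedAddCommGroup H] [InnerProductSpace ℂ H]
    [FiniteDimensional ℂ H] (ψ χ : H) (θ : ℝ) :
    ContinuousLinearMap.adjoint (Sop ψ χ θ) = -(Sop ψ χ θ) := by
  symm
  rw [ContinuousLinearMap.eq_adjoint_iff]
  intro x y
  simp only [neg_apply, Sop_apply, inner_neg_left, inner_smul_left, inner_smul_right,
    inner_sub_left, inner_sub_right, inner_conj_symm, Complex.conj_ofReal, map_mul,
    RingHom.map_sub]
  ring

lemma Sop_norm_le {H : Type*} [NormedAddCommGroup H] [InnerProductSpace ℂ H]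
    (ψ χ : H) (θ : ℝ) (hψ : ‖ψ‖ = 1) (hχ : ‖χ‖ = 1) (horth : (⟪ψ, χ⟫ : ℂ) = 0)
    (hθ : 0 ≤ θ) : ‖Sop ψ χ θ‖ ≤ θ := by
  have hON : Orthonormal ℂ ![ψ, χ] := by
    rw [orthonormal_iff_ite]
    intro i j
    fin_cases i <;> fin_cases j <;>
      simp [hψ, hχ, horth, ← inner_conj_symm χ ψ, inner_self_eq_norm_sq_to_K]
  refine ContinuousLinearMap.opNorm_le_bound _ hθ fun x => ?_
  rw [Sop_apply, norm_smul, Complex.norm_real, Real.norm_eq_abs, abs_of_nonneg hθ]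
  gcongr
  have hb := hON.sum_inner_products_le (s := Finset.univ) x
  simp [Fin.sum_univ_two] at hb
  have key : ‖(⟪ψ, x⟫ : ℂ) • χ - (⟪χ, x⟫ : ℂ) • ψ‖ ^ 2 = ‖(⟪ψ, x⟫ : ℂ)‖ ^ 2 + ‖(⟪χ, x⟫ : ℂ)‖ ^ 2 := by
    rw [@norm_sub_sq ℂ]
    have : (⟪(⟪ψ, x⟫ : ℂ) • χ, (⟪χ, x⟫ : ℂ) • ψ⟫ : ℂ) = 0 := by
      rw [inner_smul_left, inner_smul_right, ← inner_conj_symm χ ψ, horth]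
      simp
    rw [this]
    simp [norm_smul, hψ, hχ]
  have h2 : ‖(⟪ψ, x⟫ : ℂ) • χ - (⟪χ, x⟫ : ℂ) • ψ‖ ^ 2 ≤ ‖x‖ ^ 2 := by
    rw [key]; simpa using hb
  exact (pow_le_pow_iff_left₀ (norm_nonneg _) (norm_nonneg _) two_ne_zero).mp h2

lemma Sop_apply_psi {H : Type*} [NormedAddCommGroup H] [InnerProductSpace ℂ H]
    (ψ χ : H) (θ : ℝ) (hψ : ‖ψ‖ = 1) (horth : (⟪ψ, χ⟫ : ℂ) = 0) :
    Sop ψ χ θ ψ = θ • χ := by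
  have h1 : (⟪ψ, ψ⟫ : ℂ) = 1 := by
    rw [inner_self_eq_norm_sq_to_K, hψ]; norm_num
  have h2 : (⟪χ, ψ⟫ : ℂ) = 0 := by rw [← inner_conj_symm, horth, map_zero]
  rw [Sop_apply, h1, h2, Complex.coe_smul]
  simp

lemma Sop_apply_chi {H : Type*} [NormedAddCommGroup H] [InnerProductSpace ℂ H]
    (ψ χ : H) (θ : ℝ) (hχ : ‖χ‖ = 1) (horth : (⟪ψ, χ⟫ : ℂ) = 0) :
    Sop ψ χ θ χ = -(θ • ψ) := by
  have h1 : (⟪χ, χ⟫ : ℂ) = 1 := by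
    rw [inner_self_eq_norm_sq_to_K, hχ]; norm_num
  rw [Sop_apply, h1, horth, Complex.coe_smul]
  simp

lemma Sop_pow_psi {H : Type*} [NormedAddCommGroup H] [InnerProductSpace ℂ H]
    (ψ χ : H) (θ : ℝ) (hψ : ‖ψ‖ = 1) (hχ : ‖χ‖ = 1) (horth : (⟪ψ, χ⟫ : ℂ) = 0) (k : ℕ) :
    ((Sop ψ χ θ) ^ (2 * k)) ψ = (((-1 : ℝ)) ^ k * θ ^ (2 * k)) • ψ ∧
    ((Sop ψ χ θ) ^ (2 * k + 1)) ψ = (((-1 : ℝ)) ^ k * θ ^ (2 * k + 1)) • χ := by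
  induction k with
  | zero =>
    constructor
    · simp
    · simpa using Sop_apply_psi ψ χ θ hψ horth
  | succ k ih =>
    have heven : ((Sop ψ χ θ) ^ (2 * (k + 1))) ψ
        = (((-1 : ℝ)) ^ (k + 1) * θ ^ (2 * (k + 1))) • ψ := by
      have : 2 * (k + 1) = (2 * k + 1) + 1 := by ring
      rw [this, pow_succ', ContinuousLinearMap.mul_apply, ih.2, map_smul_of_tower,
        Sop_apply_chi ψ χ θ hχ horth]
      rw [smul_neg, smul_smul, ← neg_smul]
      congr 1
      ring
    refine ⟨heven, ?_⟩
    have : 2 * (k + 1) + 1 = (2 * (k + 1)) + 1 := rfl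
    rw [this, pow_succ', ContinuousLinearMap.mul_apply, heven, map_smul_of_tower,
      Sop_apply_psi ψ χ θ hψ horth, smul_smul]
    congr 1
    ring

set_option maxHeartbeats 1000000 in
lemma Sop_exp_psi {H : Type*} [NormedAddCommGroup H] [InnerProductSpace ℂ H]
    [FiniteDimensional ℂ H]
    (ψ χ : H) (θ : ℝ) (hψ : ‖ψ‖ = 1) (hχ : ‖χ‖ = 1) (horth : (⟪ψ, χ⟫ : ℂ) = 0) :
    (NormedSpace.exp (Sop ψ χ θ)) ψ = Real.cos θ • ψ + Real.sin θ • χ := by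
  set S := Sop ψ χ θ with hS
  have hsum : HasSum (fun n : ℕ => ((n.factorial : ℂ))⁻¹ • ((S ^ n) ψ)) ((NormedSpace.exp S) ψ) := by
    have h1 := (NormedSpace.expSeries_summable' (𝕂 := ℂ) S).hasSum
    rw [show (∑' n : ℕ, ((n.factorial : ℂ))⁻¹ • S ^ n) = NormedSpace.exp S from
      (congrFun (NormedSpace.exp_eq_tsum ℂ) S).symm] at h1
    exact h1.mapL (ContinuousLinearMap.apply ℂ H ψ)
  have heq : ∀ n : ℕ, ∀ r : ℝ, ∀ v : H, ((n.factorial : ℂ))⁻¹ • (r • v) = (r / (n.factorial : ℝ)) • v := by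
    intro n r v
    rw [← Complex.coe_smul r v, smul_smul, ← Complex.coe_smul]
    congr 1
    push_cast
    ring
  have hcos : HasSum (fun k : ℕ => ((2 * k).factorial : ℂ)⁻¹ • (S ^ (2 * k)) ψ) (Real.cos θ • ψ) := by
    have := (Real.hasSum_cos θ).smul_const ψ
    convert this using 2 with k
    rw [(Sop_pow_psi ψ χ θ hψ hχ horth k).1, heq]
  have hsin : HasSum (fun k : ℕ => ((2 * k + 1).factorial : ℂ)⁻¹ • (S ^ (2 * k + 1)) ψ) (Real.sin θ • χ) := by
    have := (Real.hasSum_sin θ).smul_const χ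
    convert this using 2 with k
    rw [(Sop_pow_psi ψ χ θ hψ hχ horth k).2, heq]
  exact hsum.unique
    (HasSum.even_add_odd (f := fun n : ℕ => ((n.factorial : ℂ))⁻¹ • ((S ^ n) ψ)) hcos hsin)

lemma Sop_proj {H : Type*} [NormedAddCommGroup H] [InnerProductSpace ℂ H]
    (u w : H) (θ : ℝ) (hu : ‖u‖ = 1) (horth : (⟪u, w⟫ : ℂ) = 0)
    (Q : H →L[ℂ] H) (hQ : ∀ x, Q x = (⟪u, x⟫ : ℂ) • u) :
    Q ∘L Sop u w θ ∘L Q = 0 ∧ (1 - Q) ∘L Sop u w θ ∘L (1 - Q) = 0 := by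
  have huu : (⟪u, u⟫ : ℂ) = 1 := by
    rw [inner_self_eq_norm_sq_to_K, hu]; norm_num
  have hwu : (⟪w, u⟫ : ℂ) = 0 := by rw [← inner_conj_symm, horth, map_zero]
  constructor
  · ext x
    simp [hQ, comp_apply, Sop_apply, inner_smul_right, inner_sub_right, huu, hwu, horth,
      smul_sub, smul_smul, ← Complex.coe_smul, mul_comm]
  · ext x
    simp [hQ, comp_apply, Sop_apply, inner_smul_right, inner_sub_right, huu, hwu, horth,
      smul_sub, smul_smul, sub_apply, one_apply, ← Complex.coe_smul, mul_comm, hu]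

lemma Sop_rot {H : Type*} [NormedAddCommGroup H] [InnerProductSpace ℂ H]
    (ψ χ : H) (c s θ : ℝ) (hcs : c ^ 2 + s ^ 2 = 1) :
    Sop ((c : ℂ) • ψ + (s : ℂ) • χ) ((c : ℂ) • χ - (s : ℂ) • ψ) θ = Sop ψ χ θ := by
  have hcsC : (c : ℂ) ^ 2 + (s : ℂ) ^ 2 = 1 := by exact_mod_cast congrArg (Complex.ofReal) hcs
  ext x
  simp only [Sop_apply, inner_add_left, inner_sub_left, inner_smul_left, Complex.conj_ofReal,
    smul_smul, smul_sub, smul_add, sub_smul, add_smul]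
  match_scalars
  · linear_combination (↑θ * (⟪ψ, x⟫ : ℂ)) * hcsC
  · linear_combination (-(↑θ) * (⟪χ, x⟫ : ℂ)) * hcsC

theorem stmt5 {H : Type*} [NormedAddCommGroup H] [InnerProductSpace ℂ H]
    [FiniteDimensional ℂ H]
    (ψ φ : H) (hψ : ‖ψ‖ = 1) (hφ : ‖φ‖ = 1)
    (hre : 0 < (⟪ψ, φ⟫ : ℂ).re) (him : (⟪ψ, φ⟫ : ℂ).im = 0)
    (P P₀ : H →L[ℂ] H)
    (hP : ∀ x, P x = (⟪ψ, x⟫ : ℂ) • ψ)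
    (hP₀ : ∀ x, P₀ x = (⟪φ, x⟫ : ℂ) • φ) :
    ∃ S : H →L[ℂ] H,
      ContinuousLinearMap.adjoint S = -S ∧
      ‖S‖ < Real.pi / 2 ∧
      (NormedSpace.exp S) ψ = φ ∧
      P ∘L S ∘L P = 0 ∧
      P₀ ∘L S ∘L P₀ = 0 ∧
      (1 - P) ∘L S ∘L (1 - P) = 0 ∧
      (1 - P₀) ∘L S ∘L (1 - P₀) = 0 := by
  by_cases hfe : φ = ψ
  · refine ⟨0, by rw [map_zero, neg_zero], by rw [norm_zero]; exact Real.pi_div_two_pos, ?_,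
      by rw [zero_comp, comp_zero], by rw [zero_comp, comp_zero],
      by rw [zero_comp, comp_zero], by rw [zero_comp, comp_zero]⟩
    rw [NormedSpace.exp_zero, hfe]
    simp
  · set c := (⟪ψ, φ⟫ : ℂ).re with hcdef
    have hinner : (⟪ψ, φ⟫ : ℂ) = (c : ℂ) := by
      apply Complex.ext <;> simp [him, hcdef]
    have hinner' : (⟪φ, ψ⟫ : ℂ) = (c : ℂ) := by
      rw [← inner_conj_symm, hinner, Complex.conj_ofReal]
    have hψψ : (⟪ψ, ψ⟫ : ℂ) = 1 := by
      rw [inner_self_eq_norm_sq_to_K, hψ]; norm_num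
    have hφφ : (⟪φ, φ⟫ : ℂ) = 1 := by
      rw [inner_self_eq_norm_sq_to_K, hφ]; norm_num
    have hcpos : 0 < c := hre
    have hc1 : c ≤ 1 := by
      have h1 : c ≤ ‖(⟪ψ, φ⟫ : ℂ)‖ := Complex.re_le_norm _
      have h2 : ‖(⟪ψ, φ⟫ : ℂ)‖ ≤ ‖ψ‖ * ‖φ‖ := norm_inner_le_norm ψ φ
      rw [hψ, hφ, mul_one] at h2
      linarith
    set v := φ - (c : ℂ) • ψ with hv
    have hψv : (⟪ψ, v⟫ : ℂ) = 0 := by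
      simp [hv, inner_sub_right, ← Complex.coe_smul, inner_smul_right, hinner, hψψ, hψ]
    set s := ‖v‖ with hsdef
    have hs2 : s ^ 2 = 1 - c ^ 2 := by
      rw [hsdef, hv, @norm_sub_sq ℂ, inner_smul_right, hinner', hφ, norm_smul, hψ]
      rw [← Complex.ofReal_mul]
      simp only [RCLike.re_to_complex, Complex.ofReal_re, Complex.norm_real, Real.norm_eq_abs]
      nlinarith [sq_abs c]
    have hvne : v ≠ 0 := by
      intro h0
      have hφψ : φ = (c : ℂ) • ψ := by rwa [hv, sub_eq_zero] at h0
      have habs : (1 : ℝ) = c := by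
        rw [← hφ, hφψ, norm_smul, hψ, mul_one, Complex.norm_real, Real.norm_eq_abs,
          abs_of_pos hcpos]
      apply hfe
      rw [hφψ, ← habs]
      simp
    have hspos : 0 < s := by
      rw [hsdef]; exact norm_pos_iff.mpr hvne
    set χ := (s⁻¹ : ℝ) • v with hχdef
    have hχnorm : ‖χ‖ = 1 := by
      rw [hχdef, norm_smul, Real.norm_eq_abs, abs_of_pos (inv_pos.mpr hspos), ← hsdef]
      field_simp
    have horth : (⟪ψ, χ⟫ : ℂ) = 0 := by
      rw [hχdef, ← Complex.coe_smul, inner_smul_right, hψv, mul_zero]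
    have hχψ : (⟪χ, ψ⟫ : ℂ) = 0 := by rw [← inner_conj_symm, horth, map_zero]
    have hχχ : (⟪χ, χ⟫ : ℂ) = 1 := by
      rw [inner_self_eq_norm_sq_to_K, hχnorm]; norm_num
    have hvsχ : (s : ℂ) • χ = v := by
      rw [hχdef, Complex.coe_smul, smul_smul, mul_inv_cancel₀ hspos.ne', one_smul]
    have hφdec : φ = (c : ℂ) • ψ + (s : ℂ) • χ := by
      rw [hvsχ, hv]
      abel
    set θ := Real.arccos c with hθdef
    have hθnn : 0 ≤ θ := Real.arccos_nonneg c
    have hθlt : θ < Real.pi / 2 := Real.arccos_lt_pi_div_two.mpr hcpos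
    have hcos : Real.cos θ = c := Real.cos_arccos (by linarith) hc1
    have hsin : Real.sin θ = s := by
      rw [hθdef, Real.sin_arccos, ← hs2, Real.sqrt_sq hspos.le]
    have hpair1 := Sop_proj ψ χ θ hψ horth P hP
    have hcs : c ^ 2 + s ^ 2 = 1 := by linarith
    have hrot := Sop_rot ψ χ c s θ hcs
    have hφnorm' : ‖(c : ℂ) • ψ + (s : ℂ) • χ‖ = 1 := by rw [← hφdec]; exact hφ
    have horth' : (⟪(c : ℂ) • ψ + (s : ℂ) • χ, (c : ℂ) • χ - (s : ℂ) • ψ⟫ : ℂ) = 0 := by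
      simp only [inner_add_left, inner_sub_right, inner_smul_left, inner_smul_right,
        Complex.conj_ofReal, hψψ, hχχ, horth, hχψ]
      ring
    have hP₀' : ∀ x, P₀ x = (⟪(c : ℂ) • ψ + (s : ℂ) • χ, x⟫ : ℂ) • ((c : ℂ) • ψ + (s : ℂ) • χ) := by
      intro x
      rw [← hφdec]
      exact hP₀ x
    have hpair2 := Sop_proj ((c : ℂ) • ψ + (s : ℂ) • χ) ((c : ℂ) • χ - (s : ℂ) • ψ) θ
      hφnorm' horth' P₀ hP₀'
    rw [hrot] at hpair2
    refine ⟨Sop ψ χ θ, Sop_adjoint ψ χ θ,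
      lt_of_le_of_lt (Sop_norm_le ψ χ θ hψ hχnorm horth hθnn) hθlt, ?_,
      hpair1.1, hpair2.1, hpair1.2, hpair2.2⟩
    rw [Sop_exp_psi ψ χ θ hψ hχnorm horth, hcos, hsin, hφdec,
      Complex.coe_smul, Complex.coe_smul]
end

section
/- Let Pᴬ, P₀ᴬ be orthogonal projectors on a finite-dimensional Hilbert space H_A with ‖Pᴬ - P₀ᴬ‖ < 1, and Pᴮ, P₀ᴮ orthogonal projectors on H_B with ‖Pᴮ - P₀ᴮ‖ < 1. Then ‖Pᴬ ⊗ Pᴮ - P₀ᴬ ⊗ P₀ᴮ‖ < 1. -/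
open scoped Matrix.Norms.L2Operator Kronecker

noncomputable section AuxCLM

open ContinuousLinearMap RCLike
open scoped InnerProductSpace

variable {E : Type*} [NormedAddCommGroup E] [InnerProductSpace ℂ E] [CompleteSpace E]

lemma aux_adj (S : E →L[ℂ] E) (hS : IsSelfAdjoint S) (a b : E) :
    ⟪S a, b⟫_ℂ = ⟪a, S b⟫_ℂ := by
  conv_lhs => rw [← ContinuousLinearMap.isSelfAdjoint_iff'.mp hS]
  rw [ContinuousLinearMap.adjoint_inner_left]

lemma aux_proj_inner (S : E →L[ℂ] E) (hS : IsSelfAdjoint S) (hSi : S * S = S) (y : E) :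
    re ⟪y, S y⟫_ℂ = ‖S y‖ ^ 2 := by
  have h1 : S (S y) = S y := by rw [← ContinuousLinearMap.mul_apply, hSi]
  have : ⟪y, S y⟫_ℂ = ⟪S y, S y⟫_ℂ := by
    conv_lhs => rw [← h1, ← aux_adj S hS]
  rw [this, inner_self_eq_norm_sq]

lemma aux_pyth (S : E →L[ℂ] E) (hS : IsSelfAdjoint S) (hSi : S * S = S) (y : E) :
    ‖y‖ ^ 2 = ‖S y‖ ^ 2 + ‖y - S y‖ ^ 2 := by
  have h1 : S (S y) = S y := by rw [← ContinuousLinearMap.mul_apply, hSi]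
  have horth : ⟪S y, y - S y⟫_ℂ = 0 := by
    rw [aux_adj S hS, map_sub, h1, sub_self, inner_zero_right]
  have := norm_add_sq (𝕜 := ℂ) (S y) (y - S y)
  simp only [add_sub_cancel, horth, map_zero, mul_zero, add_zero, zero_add] at this
  linarith [this]

lemma aux_proj_norm_le (S : E →L[ℂ] E) (hS : IsSelfAdjoint S) (hSi : S * S = S) (y : E) :
    ‖S y‖ ≤ ‖y‖ := by
  have h := aux_pyth S hS hSi y
  nlinarith [norm_nonneg (S y), norm_nonneg y, sq_nonneg (‖y - S y‖)]

lemma aux_key (T S : E →L[ℂ] E) (hT : IsSelfAdjoint T) (hTi : T * T = T)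
    (hS : IsSelfAdjoint S) (hSi : S * S = S) {κ : ℝ} (hκ1 : κ ≤ 1)
    (h1 : ∀ x, κ * ‖T x‖ ^ 2 ≤ ‖S (T x)‖ ^ 2)
    (h2 : ∀ x, κ * ‖S x‖ ^ 2 ≤ ‖T (S x)‖ ^ 2) :
    ‖T - S‖ ≤ Real.sqrt (1 - κ) := by
  have hκ0 : (0:ℝ) ≤ 1 - κ := by linarith
  have sqrt_bound : ∀ a b : ℝ, 0 ≤ a → 0 ≤ b → a ^ 2 ≤ (1 - κ) * b ^ 2 →
      a ≤ Real.sqrt (1 - κ) * b := by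
    intro a b ha hb h
    have := Real.sqrt_le_sqrt h
    rwa [Real.sqrt_sq ha, Real.sqrt_mul hκ0, Real.sqrt_sq hb] at this
  -- norm of (1 - T) * S
  have hb1 : ‖(1 - T) * S‖ ≤ Real.sqrt (1 - κ) := by
    refine ContinuousLinearMap.opNorm_le_bound _ (Real.sqrt_nonneg _) fun x => ?_
    have hx : ((1 - T) * S) x = S x - T (S x) := by
      simp [ContinuousLinearMap.mul_apply]
    rw [hx]
    refine sqrt_bound _ _ (norm_nonneg _) (norm_nonneg _) ?_
    have hp := aux_pyth T hT hTi (S x)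
    have hh := h2 x
    have hle := aux_proj_norm_le S hS hSi x
    nlinarith [norm_nonneg (S x), norm_nonneg x, hκ0,
      mul_le_mul_of_nonneg_left (pow_le_pow_left₀ (norm_nonneg (S x)) hle 2) hκ0]
  have hb2 : ‖S * (1 - T)‖ ≤ Real.sqrt (1 - κ) := by
    have : S * (1 - T) = star ((1 - T) * S) := by
      rw [star_mul, star_sub, star_one, hT.star_eq, hS.star_eq]
    rw [this, norm_star]
    exact hb1
  refine ContinuousLinearMap.opNorm_le_bound _ (Real.sqrt_nonneg _) fun x => ?_
  set u₁ := T x - S (T x) with hu₁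
  set u₂ := S (x - T x) with hu₂
  have hdx : (T - S) x = u₁ - u₂ := by
    simp only [hu₁, hu₂, ContinuousLinearMap.sub_apply, map_sub]
    abel
  have horth : ⟪u₁, u₂⟫_ℂ = 0 := by
    have hSu : S u₁ = 0 := by
      have : S (S (T x)) = S (T x) := by rw [← ContinuousLinearMap.mul_apply, hSi]
      simp [hu₁, map_sub, this]
    rw [hu₂, ← aux_adj S hS, hSu, inner_zero_left]
  have hsq : ‖(T - S) x‖ ^ 2 = ‖u₁‖ ^ 2 + ‖u₂‖ ^ 2 := by
    rw [hdx, norm_sub_sq (𝕜 := ℂ), horth]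
    simp
  -- bound u₁
  have hbu₁ : ‖u₁‖ ^ 2 ≤ (1 - κ) * ‖T x‖ ^ 2 := by
    have hp := aux_pyth S hS hSi (T x)
    have hh := h1 x
    rw [hu₁]; nlinarith
  -- bound u₂
  have hbu₂ : ‖u₂‖ ^ 2 ≤ (1 - κ) * ‖x - T x‖ ^ 2 := by
    have hfix : (1 - T) ((1 - T) x) = (1 - T) x := by
      have : (1 - T) * (1 - T) = 1 - T := by
        rw [mul_sub, sub_mul, sub_mul, one_mul, mul_one, hTi]; abel
      rw [← ContinuousLinearMap.mul_apply, this]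
    have hu₂' : u₂ = (S * (1 - T)) ((1 - T) x) := by
      rw [ContinuousLinearMap.mul_apply, hfix]
      simp [hu₂]
    have hle : ‖u₂‖ ≤ Real.sqrt (1 - κ) * ‖(1 - T) x‖ :=
      hu₂' ▸ le_trans ((S * (1 - T)).le_opNorm _)
        (mul_le_mul_of_nonneg_right hb2 (norm_nonneg _))
    have h1Tx : (1 - T) x = x - T x := by simp
    calc ‖u₂‖ ^ 2 ≤ (Real.sqrt (1 - κ) * ‖(1 - T) x‖) ^ 2 := by
          refine pow_le_pow_left₀ (norm_nonneg _) hle 2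
      _ = (1 - κ) * ‖x - T x‖ ^ 2 := by
          rw [mul_pow, Real.sq_sqrt hκ0, h1Tx]
  refine sqrt_bound _ _ (norm_nonneg _) (norm_nonneg _) ?_
  have hpx := aux_pyth T hT hTi x
  nlinarith [hsq, hbu₁, hbu₂]

end AuxCLM

section AuxMat

open Matrix ContinuousLinearMap RCLike
open scoped InnerProductSpace ComplexOrder

variable {k : Type*} [Fintype k] [DecidableEq k]

lemma aux_inner_eq (M : Matrix k k ℂ) (x : EuclideanSpace ℂ k) :
    ⟪x, toEuclideanCLM (𝕜 := ℂ) M x⟫_ℂ =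
      star (WithLp.equiv 2 _ x) ⬝ᵥ (M *ᵥ WithLp.equiv 2 _ x) := by
  rw [EuclideanSpace.inner_eq_star_dotProduct, Matrix.ofLp_toEuclideanCLM, dotProduct_comm]
  rfl

/-- from PSD to inner nonnegativity -/
lemma aux_psd_re (M : Matrix k k ℂ) (hM : M.PosSemidef) (x : EuclideanSpace ℂ k) :
    0 ≤ re ⟪x, toEuclideanCLM (𝕜 := ℂ) M x⟫_ℂ := by
  rw [aux_inner_eq]
  exact hM.re_dotProduct_nonneg _

/-- from inner nonnegativity and hermitian to PSD -/
lemma aux_psd_of_re (M : Matrix k k ℂ) (hM : M.IsHermitian)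
    (h : ∀ x : EuclideanSpace ℂ k, 0 ≤ re ⟪x, toEuclideanCLM (𝕜 := ℂ) M x⟫_ℂ) :
    M.PosSemidef := by
  refine Matrix.PosSemidef.of_dotProduct_mulVec_nonneg hM fun x => ?_
  set z : ℂ := star x ⬝ᵥ M *ᵥ x with hz
  have h1 : z = star (star (M *ᵥ x) ⬝ᵥ x) := Matrix.star_dotProduct _ _
  have hstar : star z = z := by
    conv_lhs => rw [h1]
    rw [star_star, Matrix.star_mulVec, hM.eq, ← Matrix.dotProduct_mulVec, hz]
  have hre : 0 ≤ re z := by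
    have := h ((WithLp.equiv 2 _).symm x)
    rw [aux_inner_eq] at this
    simpa [hz] using this
  rw [RCLike.nonneg_iff]
  exact ⟨hre, RCLike.conj_eq_iff_im.mp hstar⟩

end AuxMat

section AuxMat2

open Matrix ContinuousLinearMap RCLike
open scoped InnerProductSpace ComplexOrder

variable {k : Type*} [Fintype k] [DecidableEq k]

lemma aux_sa (A : Matrix k k ℂ) (hA : Aᴴ = A) :
    IsSelfAdjoint (toEuclideanCLM (𝕜 := ℂ) A) := by
  show star _ = _
  rw [← map_star, Matrix.star_eq_conjTranspose, hA]

lemma aux_idem (A : Matrix k k ℂ) (hA : A * A = A) :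
    toEuclideanCLM (𝕜 := ℂ) A * toEuclideanCLM (𝕜 := ℂ) A = toEuclideanCLM (𝕜 := ℂ) A := by
  rw [← _root_.map_mul, hA]

lemma aux_quad (A B : Matrix k k ℂ) (hA : Aᴴ = A) (hAi : A * A = A)
    (hB : Bᴴ = B) (hBi : B * B = B) (c : ℝ) (x : EuclideanSpace ℂ k) :
    re ⟪x, toEuclideanCLM (𝕜 := ℂ) (A * B * A - (c : ℂ) • A) x⟫_ℂ =
      ‖toEuclideanCLM (𝕜 := ℂ) B (toEuclideanCLM (𝕜 := ℂ) A x)‖ ^ 2 -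
        c * ‖toEuclideanCLM (𝕜 := ℂ) A x‖ ^ 2 := by
  set a := toEuclideanCLM (𝕜 := ℂ) A
  set b := toEuclideanCLM (𝕜 := ℂ) B
  have hsa : IsSelfAdjoint a := aux_sa A hA
  have hsb : IsSelfAdjoint b := aux_sa B hB
  have hia : a * a = a := aux_idem A hAi
  have hib : b * b = b := aux_idem B hBi
  have hmap : toEuclideanCLM (𝕜 := ℂ) (A * B * A - (c : ℂ) • A) =
      a * b * a - (c : ℂ) • a := by
    rw [_root_.map_sub, _root_.map_mul, _root_.map_mul, _root_.map_smul]
  rw [hmap]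
  have happ : (a * b * a - (c : ℂ) • a) x = a (b (a x)) - (c : ℂ) • a x := rfl
  rw [happ, inner_sub_right, map_sub]
  have t1 : re ⟪x, a (b (a x))⟫_ℂ = ‖b (a x)‖ ^ 2 := by
    rw [← aux_adj a hsa, aux_proj_inner b hsb hib]
  have t2 : re ⟪x, (c : ℂ) • a x⟫_ℂ = c * ‖a x‖ ^ 2 := by
    have t2' : re ((c : ℂ) * ⟪x, a x⟫_ℂ) = c * re ⟪x, a x⟫_ℂ := by
      simp [RCLike.re_to_complex, Complex.mul_re]
    rw [inner_smul_right, t2', aux_proj_inner a hsa hia]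
  rw [t1, t2]

lemma aux_side_psd (P P₀ : Matrix k k ℂ)
    (hP : Pᴴ = P) (hPi : P * P = P) (hP₀ : P₀ᴴ = P₀) (hP₀i : P₀ * P₀ = P₀)
    {α : ℝ} (hα : ‖P - P₀‖ ≤ α) :
    (P * P₀ * P - ((1 - α ^ 2 : ℝ) : ℂ) • P).PosSemidef := by
  have hα0 : 0 ≤ α := le_trans (norm_nonneg _) hα
  apply aux_psd_of_re
  · show _ᴴ = _
    simp only [Matrix.conjTranspose_sub, Matrix.conjTranspose_mul, Matrix.conjTranspose_smul,
      hP, hP₀, Complex.star_def, Complex.conj_ofReal, Matrix.mul_assoc]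
  · intro x
    rw [aux_quad P P₀ hP hPi hP₀ hP₀i _ x]
    set p := toEuclideanCLM (𝕜 := ℂ) P
    set p₀ := toEuclideanCLM (𝕜 := ℂ) P₀
    have hsp : IsSelfAdjoint p := aux_sa P hP
    have hsp₀ : IsSelfAdjoint p₀ := aux_sa P₀ hP₀
    have hpyth := aux_pyth p₀ hsp₀ (aux_idem P₀ hP₀i) (p x)
    have hdiff : p x - p₀ (p x) = (p - p₀) (p x) := by
      have : p (p x) = p x := by rw [← ContinuousLinearMap.mul_apply, aux_idem P hPi]
      simp [this]
    have hnorm : ‖p x - p₀ (p x)‖ ≤ α * ‖p x‖ := by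
      rw [hdiff]
      refine le_trans ((p - p₀).le_opNorm _) ?_
      have : ‖p - p₀‖ = ‖P - P₀‖ := by rw [← _root_.map_sub, ← Matrix.cstar_norm_def]
      rw [this]
      exact mul_le_mul_of_nonneg_right hα (norm_nonneg _)
    have hsq : ‖p x - p₀ (p x)‖ ^ 2 ≤ α ^ 2 * ‖p x‖ ^ 2 := by
      rw [← mul_pow]
      exact pow_le_pow_left₀ (norm_nonneg _) hnorm 2
    nlinarith [norm_nonneg (p x)]

lemma aux_smul_psd {c : ℝ} (hc : 0 ≤ c) {A : Matrix k k ℂ} (hA : A.PosSemidef) :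
    ((c : ℂ) • A).PosSemidef := by
  obtain ⟨B, rfl⟩ : ∃ B : Matrix k k ℂ, A = Bᴴ * B := by
    open MatrixOrder in exact CStarAlgebra.nonneg_iff_eq_star_mul_self.mp hA.nonneg
  have : (c : ℂ) • (Bᴴ * B) =
      ((Real.sqrt c : ℂ) • B)ᴴ * ((Real.sqrt c : ℂ) • B) := by
    rw [Matrix.conjTranspose_smul, Matrix.smul_mul, Matrix.mul_smul, smul_smul]
    congr 1
    simp [Complex.star_def, Complex.conj_ofReal, ← Complex.ofReal_mul, Real.mul_self_sqrt hc]
  rw [this]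
  exact Matrix.posSemidef_conjTranspose_mul_self _

end AuxMat2

section AuxKron

open Matrix
open scoped ComplexOrder

variable {m n : Type*} [Fintype m] [DecidableEq m] [Fintype n] [DecidableEq n]

lemma aux_kron_conjTranspose (A : Matrix m m ℂ) (B : Matrix n n ℂ) :
    (A ⊗ₖ B)ᴴ = Aᴴ ⊗ₖ Bᴴ := by
  ext ⟨i, j⟩ ⟨p, q⟩
  simp [Matrix.conjTranspose_apply, Matrix.kroneckerMap_apply, mul_comm]

lemma aux_kron_psd {A : Matrix m m ℂ} {B : Matrix n n ℂ}
    (hA : A.PosSemidef) (hB : B.PosSemidef) : (A ⊗ₖ B).PosSemidef := by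
  obtain ⟨A', rfl⟩ : ∃ A' : Matrix m m ℂ, A = A'ᴴ * A' := by
    open MatrixOrder in exact CStarAlgebra.nonneg_iff_eq_star_mul_self.mp hA.nonneg
  obtain ⟨B', rfl⟩ : ∃ B' : Matrix n n ℂ, B = B'ᴴ * B' := by
    open MatrixOrder in exact CStarAlgebra.nonneg_iff_eq_star_mul_self.mp hB.nonneg
  rw [Matrix.mul_kronecker_mul, ← aux_kron_conjTranspose]
  exact Matrix.posSemidef_conjTranspose_mul_self _

lemma aux_kron_sub_split (X X' : Matrix m m ℂ) (Y Y' : Matrix n n ℂ) :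
    X ⊗ₖ Y - X' ⊗ₖ Y' = (X - X') ⊗ₖ Y + X' ⊗ₖ (Y - Y') := by
  ext ⟨i, j⟩ ⟨p, q⟩
  simp [Matrix.kroneckerMap_apply]
  ring

lemma aux_kron_psd_sub {X X' : Matrix m m ℂ} {Y Y' : Matrix n n ℂ}
    (hX' : X'.PosSemidef) (hY : Y.PosSemidef)
    (hXX : (X - X').PosSemidef) (hYY : (Y - Y').PosSemidef) :
    (X ⊗ₖ Y - X' ⊗ₖ Y').PosSemidef := by
  rw [aux_kron_sub_split]
  exact (aux_kron_psd hXX hY).add (aux_kron_psd hX' hYY)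

end AuxKron

section Final
open scoped ComplexOrder

theorem aux_stmt8 {m n : Type*} [Fintype m] [DecidableEq m] [Fintype n] [DecidableEq n]
    (PA P₀A : Matrix m m ℂ) (PB P₀B : Matrix n n ℂ)
    (hPA : PA.conjTranspose = PA) (hPAidem : PA * PA = PA)
    (hP₀A : P₀A.conjTranspose = P₀A) (hP₀Aidem : P₀A * P₀A = P₀A)
    (hPB : PB.conjTranspose = PB) (hPBidem : PB * PB = PB)
    (hP₀B : P₀B.conjTranspose = P₀B) (hP₀Bidem : P₀B * P₀B = P₀B)
    (hA : ‖PA - P₀A‖ < 1) (hB : ‖PB - P₀B‖ < 1) :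
    ‖PA ⊗ₖ PB - P₀A ⊗ₖ P₀B‖ < 1 := by
  classical
  set α := ‖PA - P₀A‖ with hαdef
  set β := ‖PB - P₀B‖ with hβdef
  have hα0 : 0 ≤ α := norm_nonneg _
  have hβ0 : 0 ≤ β := norm_nonneg _
  have hA2 : α ^ 2 < 1 := by nlinarith
  have hB2 : β ^ 2 < 1 := by nlinarith
  set κ : ℝ := (1 - α ^ 2) * (1 - β ^ 2) with hκdef
  have hκpos : 0 < κ := by nlinarith
  have hκ1 : κ ≤ 1 := by nlinarith
  set R := PA ⊗ₖ PB with hRdef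
  set R₀ := P₀A ⊗ₖ P₀B with hR₀def
  have hR : R.conjTranspose = R := by rw [hRdef, aux_kron_conjTranspose, hPA, hPB]
  have hR₀ : R₀.conjTranspose = R₀ := by rw [hR₀def, aux_kron_conjTranspose, hP₀A, hP₀B]
  have hRi : R * R = R := by
    rw [hRdef, ← Matrix.mul_kronecker_mul, hPAidem, hPBidem]
  have hR₀i : R₀ * R₀ = R₀ := by
    rw [hR₀def, ← Matrix.mul_kronecker_mul, hP₀Aidem, hP₀Bidem]
  have hPApsd : PA.PosSemidef := by
    have h : PA.conjTranspose * PA = PA := by rw [hPA, hPAidem]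
    exact h ▸ Matrix.posSemidef_conjTranspose_mul_self PA
  have hPBpsd : PB.PosSemidef := by
    have h : PB.conjTranspose * PB = PB := by rw [hPB, hPBidem]
    exact h ▸ Matrix.posSemidef_conjTranspose_mul_self PB
  have hP₀Apsd : P₀A.PosSemidef := by
    have h : P₀A.conjTranspose * P₀A = P₀A := by rw [hP₀A, hP₀Aidem]
    exact h ▸ Matrix.posSemidef_conjTranspose_mul_self P₀A
  have hP₀Bpsd : P₀B.PosSemidef := by
    have h : P₀B.conjTranspose * P₀B = P₀B := by rw [hP₀B, hP₀Bidem]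
    exact h ▸ Matrix.posSemidef_conjTranspose_mul_self P₀B
  -- the two PSD inequalities
  have hPSD1 : (R * R₀ * R - (κ : ℂ) • R).PosSemidef := by
    have e1 : R * R₀ * R = (PA * P₀A * PA) ⊗ₖ (PB * P₀B * PB) := by
      rw [hRdef, hR₀def]
      rw [Matrix.mul_kronecker_mul, Matrix.mul_kronecker_mul]
    have e2 : (((1 - α ^ 2 : ℝ) : ℂ) • PA) ⊗ₖ (((1 - β ^ 2 : ℝ) : ℂ) • PB) =
        (κ : ℂ) • R := by
      rw [Matrix.smul_kronecker, Matrix.kronecker_smul, smul_smul, hRdef, hκdef]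
      congr 1
      push_cast
      ring
    rw [e1, ← e2]
    refine aux_kron_psd_sub ?_ ?_ ?_ ?_
    · exact aux_smul_psd (by nlinarith) hPApsd
    · have h := hP₀Bpsd.conjTranspose_mul_mul_same PB
      rwa [hPB] at h
    · exact aux_side_psd PA P₀A hPA hPAidem hP₀A hP₀Aidem le_rfl
    · exact aux_side_psd PB P₀B hPB hPBidem hP₀B hP₀Bidem le_rfl
  have hPSD2 : (R₀ * R * R₀ - (κ : ℂ) • R₀).PosSemidef := by
    have e1 : R₀ * R * R₀ = (P₀A * PA * P₀A) ⊗ₖ (P₀B * PB * P₀B) := by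
      rw [hRdef, hR₀def]
      rw [Matrix.mul_kronecker_mul, Matrix.mul_kronecker_mul]
    have e2 : (((1 - α ^ 2 : ℝ) : ℂ) • P₀A) ⊗ₖ (((1 - β ^ 2 : ℝ) : ℂ) • P₀B) =
        (κ : ℂ) • R₀ := by
      rw [Matrix.smul_kronecker, Matrix.kronecker_smul, smul_smul, hR₀def, hκdef]
      congr 1
      push_cast
      ring
    rw [e1, ← e2]
    refine aux_kron_psd_sub ?_ ?_ ?_ ?_
    · exact aux_smul_psd (by nlinarith) hP₀Apsd
    · have h := hPBpsd.conjTranspose_mul_mul_same P₀B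
      rwa [hP₀B] at h
    · exact aux_side_psd P₀A PA hP₀A hP₀Aidem hPA hPAidem (by rw [norm_sub_rev])
    · exact aux_side_psd P₀B PB hP₀B hP₀Bidem hPB hPBidem (by rw [norm_sub_rev])
  -- move to continuous linear maps
  set T := Matrix.toEuclideanCLM (𝕜 := ℂ) R with hTdef
  set S := Matrix.toEuclideanCLM (𝕜 := ℂ) R₀ with hSdef
  have hnorm : ‖R - R₀‖ = ‖T - S‖ := by
    rw [hTdef, hSdef, ← _root_.map_sub, ← Matrix.cstar_norm_def]
  have h1 : ∀ x, κ * ‖T x‖ ^ 2 ≤ ‖S (T x)‖ ^ 2 := by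
    intro x
    have h := aux_psd_re _ hPSD1 x
    rw [aux_quad R R₀ hR hRi hR₀ hR₀i κ x] at h
    linarith
  have h2 : ∀ x, κ * ‖S x‖ ^ 2 ≤ ‖T (S x)‖ ^ 2 := by
    intro x
    have h := aux_psd_re _ hPSD2 x
    rw [aux_quad R₀ R hR₀ hR₀i hR hRi κ x] at h
    linarith
  have hkey := aux_key T S (aux_sa R hR) (aux_idem R hRi) (aux_sa R₀ hR₀)
    (aux_idem R₀ hR₀i) hκ1 h1 h2
  have hlt : Real.sqrt (1 - κ) < 1 := by
    have h1k : 1 - κ < 1 := by linarith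
    calc Real.sqrt (1 - κ) < Real.sqrt 1 := Real.sqrt_lt_sqrt (by linarith) h1k
      _ = 1 := Real.sqrt_one
  calc ‖R - R₀‖ = ‖T - S‖ := hnorm
    _ ≤ Real.sqrt (1 - κ) := hkey
    _ < 1 := hlt

end Final

theorem stmt8 {m n : Type*} [Fintype m] [DecidableEq m] [Fintype n] [DecidableEq n]
    (PA P₀A : Matrix m m ℂ) (PB P₀B : Matrix n n ℂ)
    (hPA : PA.conjTranspose = PA) (hPAidem : PA * PA = PA)
    (hP₀A : P₀A.conjTranspose = P₀A) (hP₀Aidem : P₀A * P₀A = P₀A)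
    (hPB : PB.conjTranspose = PB) (hPBidem : PB * PB = PB)
    (hP₀B : P₀B.conjTranspose = P₀B) (hP₀Bidem : P₀B * P₀B = P₀B)
    (hA : ‖PA - P₀A‖ < 1) (hB : ‖PB - P₀B‖ < 1) :
    ‖PA ⊗ₖ PB - P₀A ⊗ₖ P₀B‖ < 1 := by
  exact aux_stmt8 PA P₀A PB P₀B hPA hPAidem hP₀A hP₀Aidem hPB hPBidem hP₀B hP₀Bidem hA hB
end

section
/- Let P₀ be an orthogonal projector and S an anti-Hermitian block-off-diagonal operator (P₀SP₀ = 0 = (I-P₀)S(I-P₀)) with ‖S‖ < π/2. Then the compressions P₀ exp(S) P₀ and (I-P₀) exp(S) (I-P₀), viewed as operators on range(P₀) and range(I-P₀) respectively, are positive-definite. -/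
open ContinuousLinearMap
open scoped ComplexInnerProductSpace

-- exp of operator applied to eigenvector
lemma exp_apply_eigen {H : Type*} [NormedAddCommGroup H] [InnerProductSpace ℂ H]
    [CompleteSpace H] (T : H →L[ℂ] H) (c : ℂ) (v : H) (h : T v = c • v) :
    NormedSpace.exp T v = Complex.exp c • v := by
  have hpow : ∀ n : ℕ, (T ^ n) v = c ^ n • v := by
    intro n
    induction n with
    | zero => simp
    | succ n ih =>
      rw [pow_succ, ContinuousLinearMap.mul_apply, h, map_smul, ih, smul_smul, ← pow_succ']
  have hsum := NormedSpace.expSeries_summable' (𝕂 := ℂ) T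
  have h1 : NormedSpace.exp T v = ∑' n : ℕ, (((n.factorial : ℂ))⁻¹ • T ^ n) v := by
    rw [NormedSpace.exp_eq_tsum ℂ]
    exact ((ContinuousLinearMap.apply ℂ H v).map_tsum hsum)
  rw [h1]
  have h2 : ∀ n : ℕ, (((n.factorial : ℂ))⁻¹ • T ^ n) v = (((n.factorial : ℂ))⁻¹ * c ^ n) • v := by
    intro n
    rw [ContinuousLinearMap.smul_apply, hpow, smul_smul]
  simp_rw [h2]
  rw [Summable.tsum_smul_const ?_]
  · congr 1
    rw [Complex.exp_eq_exp_ℂ, NormedSpace.exp_eq_tsum ℂ]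
    simp [smul_eq_mul]
  · simpa [smul_eq_mul] using NormedSpace.expSeries_summable' (𝕂 := ℂ) c

set_option maxHeartbeats 1000000 in
theorem stmt12 {H : Type*} [NormedAddCommGroup H] [InnerProductSpace ℂ H]
    [FiniteDimensional ℂ H]
    (P₀ S : H →L[ℂ] H)
    (hP₀ : ContinuousLinearMap.adjoint P₀ = P₀) (hP₀idem : P₀ ∘L P₀ = P₀)
    (hS : ContinuousLinearMap.adjoint S = -S)
    (hod : P₀ ∘L S ∘L P₀ = 0 ∧ (1 - P₀) ∘L S ∘L (1 - P₀) = 0)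
    (hnorm : ‖S‖ < Real.pi / 2) :
    (ContinuousLinearMap.adjoint (P₀ ∘L NormedSpace.exp S ∘L P₀) =
        P₀ ∘L NormedSpace.exp S ∘L P₀ ∧
      ∀ x : H, P₀ x = x → x ≠ 0 → 0 < ((⟪x, (NormedSpace.exp S) x⟫ : ℂ)).re) ∧
    (ContinuousLinearMap.adjoint ((1 - P₀) ∘L NormedSpace.exp S ∘L (1 - P₀)) =
        (1 - P₀) ∘L NormedSpace.exp S ∘L (1 - P₀) ∧
      ∀ x : H, (1 - P₀) x = x → x ≠ 0 →
        0 < ((⟪x, (NormedSpace.exp S) x⟫ : ℂ)).re) := by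
  -- algebraic facts
  have h1 : P₀ * S * P₀ = 0 := hod.1
  have hP : P₀ * P₀ = P₀ := hP₀idem
  have h2 : P₀ * S + S * P₀ = S := by
    have h := hod.2
    have hexp : (1 - P₀) * S * (1 - P₀) = S - (P₀ * S + S * P₀) + P₀ * S * P₀ := by
      noncomm_ring
    rw [show ((1 - P₀) ∘L S ∘L (1 - P₀) : H →L[ℂ] H) = (1 - P₀) * S * (1 - P₀) from rfl,
      hexp, h1, add_zero, sub_eq_zero] at h
    exact h.symm
  set U : H →L[ℂ] H := 2 • P₀ - 1 with hUdef
  have hU2 : U * U = 1 := by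
    have : U * U = 4 • (P₀ * P₀) - 4 • P₀ + 1 := by rw [hUdef]; noncomm_ring
    rw [this, hP]; abel
  have hUSU : U * S * U = -S := by
    have : U * S * U = 4 • (P₀ * S * P₀) - 2 • (P₀ * S + S * P₀) + S := by
      rw [hUdef]; noncomm_ring
    rw [this, h1, h2]; abel
  set Uu : (H →L[ℂ] H)ˣ := ⟨U, U, hU2, hU2⟩ with hUu
  have hexpneg : NormedSpace.exp (-S) = U * NormedSpace.exp S * U := by
    rw [← hUSU]
    letI : NormedAlgebra ℚ (H →L[ℂ] H) := NormedAlgebra.restrictScalars ℚ ℂ (H →L[ℂ] H)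
    have := NormedSpace.exp_units_conj Uu S
    simpa [hUu] using this
  have hadjexp : ContinuousLinearMap.adjoint (NormedSpace.exp S) =
      NormedSpace.exp (-S) := by
    rw [← ContinuousLinearMap.star_eq_adjoint, NormedSpace.star_exp,
      ContinuousLinearMap.star_eq_adjoint, hS]
  have hPU : P₀ * U = P₀ := by
    rw [hUdef]; rw [mul_sub, mul_smul_comm, hP, mul_one, two_smul]; abel
  have hUP : U * P₀ = P₀ := by
    rw [hUdef]; rw [sub_mul, smul_mul_assoc, hP, one_mul, two_smul]; abel
  have hQU : (1 - P₀) * U = -(1 - P₀) := by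
    rw [sub_mul, one_mul, hPU, hUdef, two_smul]; abel
  have hUQ : U * (1 - P₀) = -(1 - P₀) := by
    rw [mul_sub, mul_one, hUP, hUdef, two_smul]; abel
  have hQadj : ContinuousLinearMap.adjoint (1 - P₀) = 1 - P₀ := by
    rw [← ContinuousLinearMap.star_eq_adjoint, star_sub, star_one,
      ContinuousLinearMap.star_eq_adjoint, hP₀]
  -- positivity: holds for all nonzero x
  have hpos : ∀ x : H, x ≠ 0 → 0 < ((⟪x, (NormedSpace.exp S) x⟫ : ℂ)).re := by
    intro x hx
    set A : H →L[ℂ] H := (-Complex.I) • S with hA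
    have hAsa : IsSelfAdjoint A := by
      rw [IsSelfAdjoint, hA, star_smul, ContinuousLinearMap.star_eq_adjoint, hS]
      simp [Complex.conj_I]
    have hAsym : (A : H →ₗ[ℂ] H).IsSymmetric :=
      (ContinuousLinearMap.isSelfAdjoint_iff_isSymmetric).mp hAsa
    have hnA : ‖A‖ = ‖S‖ := by rw [hA]; rw [norm_smul (-Complex.I) S, norm_neg, Complex.norm_I, one_mul]
    set n := Module.finrank ℂ H with hn
    have hnrk : Module.finrank ℂ H = n := rfl
    set b := hAsym.eigenvectorBasis hnrk with hb
    set μ := hAsym.eigenvalues hnrk with hμ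
    have happ : ∀ i, A (b i) = ((μ i : ℂ)) • b i := fun i =>
      hAsym.apply_eigenvectorBasis hnrk i
    have hbnorm : ∀ i, ‖b i‖ = 1 := fun i => (b.orthonormal).1 i
    have hmub : ∀ i, |μ i| ≤ ‖S‖ := by
      intro i
      have hle := A.le_opNorm (b i)
      rw [happ i, norm_smul, hbnorm i, hnA, mul_one, mul_one, Complex.norm_real,
        Real.norm_eq_abs] at hle
      exact hle
    have hcos : ∀ i, 0 < Real.cos (μ i) := by
      intro i
      apply Real.cos_pos_of_mem_Ioo
      constructor
      · linarith [(abs_le.mp (hmub i)).1]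
      · linarith [(abs_le.mp (hmub i)).2]
    have hSb : ∀ i, S (b i) = ((μ i : ℂ) * Complex.I) • b i := by
      intro i
      have h0 : S (b i) = Complex.I • A (b i) := by
        rw [hA]; simp [smul_smul]
      rw [h0, happ i, smul_smul, mul_comm]
    have hexpb : ∀ i, NormedSpace.exp S (b i) =
        Complex.exp ((μ i : ℂ) * Complex.I) • b i := fun i =>
      exp_apply_eigen S _ (b i) (hSb i)
    have hexpx : NormedSpace.exp S x =
        ∑ i, ((⟪b i, x⟫ : ℂ) * Complex.exp ((μ i : ℂ) * Complex.I)) • b i := by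
      conv_lhs => rw [← b.sum_repr' x]
      rw [map_sum]
      congr 1
      funext i
      rw [map_smul, hexpb i, smul_smul]
    have hinner : ((⟪x, (NormedSpace.exp S) x⟫ : ℂ)) =
        ∑ i, ((⟪b i, x⟫ : ℂ) * Complex.exp ((μ i : ℂ) * Complex.I) *
          (starRingEnd ℂ) (⟪b i, x⟫ : ℂ)) := by
      rw [hexpx, inner_sum]
      congr 1
      funext i
      rw [inner_smul_right, ← inner_conj_symm x (b i)]
    have hre : ((⟪x, (NormedSpace.exp S) x⟫ : ℂ)).re =
        ∑ i, Real.cos (μ i) * ‖(⟪b i, x⟫ : ℂ)‖ ^ 2 := by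
      rw [hinner, Complex.re_sum]
      congr 1
      funext i
      have : (⟪b i, x⟫ : ℂ) * Complex.exp ((μ i : ℂ) * Complex.I) *
          (starRingEnd ℂ) (⟪b i, x⟫ : ℂ) =
          Complex.exp ((μ i : ℂ) * Complex.I) * ((‖(⟪b i, x⟫ : ℂ)‖ : ℂ) ^ 2) := by
        rw [mul_comm (⟪b i, x⟫ : ℂ) _, mul_assoc, Complex.mul_conj']
      rw [this]
      have h2 : ((‖(⟪b i, x⟫ : ℂ)‖ : ℂ) ^ 2) = ((‖(⟪b i, x⟫ : ℂ)‖ ^ 2 : ℝ) : ℂ) := by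
        norm_cast
      rw [h2, Complex.mul_re, Complex.ofReal_re, Complex.ofReal_im, mul_zero, sub_zero,
        Complex.exp_ofReal_mul_I_re]
    rw [hre]
    have hex : ∃ i, (⟪b i, x⟫ : ℂ) ≠ 0 := by
      by_contra hcon
      push_neg at hcon
      apply hx
      rw [← b.sum_repr' x]
      simp [hcon]
    obtain ⟨i0, hi0⟩ := hex
    apply Finset.sum_pos'
    · intro i _
      exact mul_nonneg (hcos i).le (sq_nonneg _)
    · exact ⟨i0, Finset.mem_univ i0, by
        exact mul_pos (hcos i0) (pow_pos (norm_pos_iff.mpr hi0) 2)⟩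
  -- compression identities
  have hPcomp : (P₀ ∘L NormedSpace.exp (-S)) ∘L P₀ =
      P₀ ∘L (NormedSpace.exp S ∘L P₀) := by
    show (P₀ * NormedSpace.exp (-S)) * P₀ = P₀ * (NormedSpace.exp S * P₀)
    rw [hexpneg]
    calc (P₀ * (U * NormedSpace.exp S * U)) * P₀
        = (P₀ * U) * NormedSpace.exp S * (U * P₀) := by noncomm_ring
      _ = P₀ * (NormedSpace.exp S * P₀) := by rw [hPU, hUP]; noncomm_ring
  have hQcomp : ((1 - P₀) ∘L NormedSpace.exp (-S)) ∘L (1 - P₀) =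
      (1 - P₀) ∘L (NormedSpace.exp S ∘L (1 - P₀)) := by
    show ((1 - P₀) * NormedSpace.exp (-S)) * (1 - P₀) =
      (1 - P₀) * (NormedSpace.exp S * (1 - P₀))
    rw [hexpneg]
    calc ((1 - P₀) * (U * NormedSpace.exp S * U)) * (1 - P₀)
        = ((1 - P₀) * U) * NormedSpace.exp S * (U * (1 - P₀)) := by noncomm_ring
      _ = (-(1 - P₀)) * NormedSpace.exp S * (-(1 - P₀)) := by rw [hQU, hUQ]
      _ = (1 - P₀) * (NormedSpace.exp S * (1 - P₀)) := by noncomm_ring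
  refine ⟨⟨?_, fun x _ hx => hpos x hx⟩, ⟨?_, fun x _ hx => hpos x hx⟩⟩
  · rw [ContinuousLinearMap.adjoint_comp, ContinuousLinearMap.adjoint_comp, hP₀, hadjexp]
    exact hPcomp
  · rw [ContinuousLinearMap.adjoint_comp, ContinuousLinearMap.adjoint_comp, hQadj, hadjexp]
    exact hQcomp
end

section
/- With H₀ having a single eigenvalue on the low-energy subspace (H₀P₀ = E P₀ for some scalar E), for any operators X, Y one has P₀ [L(X), O(Y)] P₀ = - P₀ [O(X), L(Y)] P₀, where O(Z) = P₀ Z Q₀ + Q₀ Z P₀ and L is the gap-weighted superoperator L(Z) = Σ ⟨i|O(Z)|j⟩/(E_i - E_j) |i⟩⟨j| summed over pairs with exactly one index in I₀. -/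
open ContinuousLinearMap
open scoped ComplexInnerProductSpace

theorem stmt15 {H : Type*} [NormedAddCommGroup H] [InnerProductSpace ℂ H]
    [FiniteDimensional ℂ H]
    {ι : Type*} [Fintype ι] [DecidableEq ι]
    (e : OrthonormalBasis ι ℂ H) (E : ι → ℝ)
    (H₀ : H →L[ℂ] H) (hH₀ : ∀ i, H₀ (e i) = (E i : ℂ) • e i)
    (I₀ : Finset ι) (Esc : ℝ)
    (hflat : ∀ i ∈ I₀, E i = Esc) (hsep : ∀ j ∉ I₀, E j ≠ Esc)
    (P₀ : H →L[ℂ] H)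
    (hP₀ : ∀ x, P₀ x = ∑ i ∈ I₀, (⟪e i, x⟫ : ℂ) • e i)
    (O : (H →L[ℂ] H) → (H →L[ℂ] H))
    (hO : ∀ Z, O Z = P₀ ∘L Z ∘L (1 - P₀) + (1 - P₀) ∘L Z ∘L P₀)
    (L : (H →L[ℂ] H) → (H →L[ℂ] H))
    (hL : ∀ (Z : H →L[ℂ] H) (x : H), L Z x =
      ∑ i : ι, ∑ j : ι,
        (if (i ∈ I₀ ∧ j ∉ I₀) ∨ (i ∉ I₀ ∧ j ∈ I₀) then
          (⟪e i, (O Z) (e j)⟫ : ℂ) / ((E i : ℂ) - (E j : ℂ)) * (⟪e j, x⟫ : ℂ)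
        else 0) • e i) :
    ∀ X Y : H →L[ℂ] H,
      P₀ ∘L (L X ∘L O Y - O Y ∘L L X) ∘L P₀ =
        -(P₀ ∘L (O X ∘L L Y - L Y ∘L O X) ∘L P₀) := by
  intro X Y
  have hinner : ∀ a b : ι, (⟪e a, e b⟫ : ℂ) = if a = b then 1 else 0 :=
    orthonormal_iff_ite.mp e.orthonormal
  have hPinner : ∀ (a : ι) (y : H), (⟪e a, P₀ y⟫ : ℂ) = if a ∈ I₀ then ⟪e a, y⟫ else 0 := by
    intro a y
    rw [hP₀, inner_sum]
    simp [inner_smul_right, hinner]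
  have hPe : ∀ b, P₀ (e b) = if b ∈ I₀ then e b else 0 := by
    intro b
    rw [hP₀]
    simp [hinner, ite_smul]
  have hAB : ∀ (A B : H →L[ℂ] H) (a b : ι),
      (⟪e a, A (B (e b))⟫ : ℂ) = ∑ k, (⟪e k, B (e b)⟫ : ℂ) * ⟪e a, A (e k)⟫ := by
    intro A B a b
    conv_lhs => rw [← e.sum_repr (B (e b))]
    rw [map_sum, inner_sum]
    simp [e.repr_apply_apply, inner_smul_right]
  have hLent : ∀ (Z : H →L[ℂ] H) (a b : ι),
      (⟪e a, L Z (e b)⟫ : ℂ) =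
        if (a ∈ I₀ ∧ b ∉ I₀) ∨ (a ∉ I₀ ∧ b ∈ I₀) then
          (⟪e a, O Z (e b)⟫ : ℂ) / ((E a : ℂ) - (E b : ℂ)) else 0 := by
    intro Z a b
    rw [hL, inner_sum]
    rw [Finset.sum_eq_single a]
    · rw [inner_sum]
      rw [Finset.sum_eq_single b]
      · by_cases h : (a ∈ I₀ ∧ b ∉ I₀) ∨ (a ∉ I₀ ∧ b ∈ I₀) <;>
          simp [h, apply_ite (fun y : H => (⟪e a, y⟫ : ℂ)), inner_smul_right, hinner]
      · intro j _ hj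
        simp [apply_ite (fun y : H => (⟪e a, y⟫ : ℂ)), inner_smul_right, hinner, hj]
      · simp
    · intro i _ hi
      rw [inner_sum]
      apply Finset.sum_eq_zero
      intro j _
      simp [apply_ite (fun y : H => (⟪e a, y⟫ : ℂ)), inner_smul_right, hinner, Ne.symm hi]
    · simp
  have hext : ∀ A B : H →L[ℂ] H,
      (∀ a b : ι, (⟪e a, A (e b)⟫ : ℂ) = ⟪e a, B (e b)⟫) → A = B := by
    intro A B h
    have hb : ∀ b, A (e b) = B (e b) := by
      intro b
      apply e.repr.injective
      ext a
      simpa [e.repr_apply_apply] using h a b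
    ext x
    conv_lhs => rw [← e.sum_repr x]
    conv_rhs => rw [← e.sum_repr x]
    simp [map_sum, map_smul, hb]
  apply hext
  intro a b
  simp only [coe_comp', Function.comp_apply, sub_apply, neg_apply, inner_neg_right]
  rw [hPe b]
  by_cases hb : b ∈ I₀
  · simp only [if_pos hb]
    rw [map_sub, map_sub, inner_sub_right, inner_sub_right,
        hPinner, hPinner, hPinner, hPinner]
    by_cases ha : a ∈ I₀
    · simp only [if_pos ha, inner_sub_right]
      rw [hAB (L X) (O Y), hAB (O Y) (L X), hAB (O X) (L Y), hAB (L Y) (O X)]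
      rw [← Finset.sum_sub_distrib, ← Finset.sum_sub_distrib, ← Finset.sum_neg_distrib]
      refine Finset.sum_congr rfl fun k _ => ?_
      by_cases hk : k ∈ I₀
      · rw [hLent, hLent, hLent, hLent]
        simp [ha, hb, hk]
      · rw [hLent, hLent, hLent, hLent]
        have c1 : (a ∈ I₀ ∧ k ∉ I₀) ∨ (a ∉ I₀ ∧ k ∈ I₀) := Or.inl ⟨ha, hk⟩
        have c2 : (k ∈ I₀ ∧ b ∉ I₀) ∨ (k ∉ I₀ ∧ b ∈ I₀) := Or.inr ⟨hk, hb⟩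
        simp only [if_pos c1, if_pos c2]
        have hEa : E a = Esc := hflat a ha
        have hEb : E b = Esc := hflat b hb
        have hne : ((Esc : ℂ) - (E k : ℂ)) ≠ 0 := by
          rw [sub_ne_zero]
          exact_mod_cast fun h => hsep k hk (by exact_mod_cast h.symm)
        have hne' : ((E k : ℂ) - (Esc : ℂ)) ≠ 0 := fun h =>
          hne (by rw [← neg_sub] at h; simpa using neg_eq_zero.mp (by simpa using h))
        rw [hEa, hEb]
        field_simp
        ring
    · simp [ha]
  · simp [if_neg hb]
end

section
/- Let P₀ be an orthogonal projector and S an anti-Hermitian block-off-diagonal operator with respect to P₀. For any Hermitian H, decompose exp(ad_S)(H) into its block-diagonal and block-off-diagonal parts with respect to P₀. Then the block-diagonal part equals cosh(ad_S)(H_d) + sinh(ad_S)(H_od) and the block-off-diagonal part equals sinh(ad_S)(H_d) + cosh(ad_S)(H_od), where H_d = P₀HP₀ + Q₀HQ₀ and H_od = P₀HQ₀ + Q₀HP₀ with Q₀ = I - P₀. -/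
open ContinuousLinearMap

set_option synthInstance.maxHeartbeats 1000000
set_option maxHeartbeats 2000000

theorem stmt16 {E : Type*} [NormedAddCommGroup E] [InnerProductSpace ℂ E]
    [FiniteDimensional ℂ E]
    (P₀ S Ham : E →L[ℂ] E)
    (hP₀ : ContinuousLinearMap.adjoint P₀ = P₀) (hP₀idem : P₀ ∘L P₀ = P₀)
    (hS : ContinuousLinearMap.adjoint S = -S)
    (hSod : P₀ ∘L S ∘L P₀ = 0 ∧ (1 - P₀) ∘L S ∘L (1 - P₀) = 0)
    (hHam : ContinuousLinearMap.adjoint Ham = Ham)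
    (adS : (E →L[ℂ] E) → (E →L[ℂ] E))
    (hadS : ∀ X, adS X = S ∘L X - X ∘L S)
    (Hd Hod : E →L[ℂ] E)
    (hHd : Hd = P₀ ∘L Ham ∘L P₀ + (1 - P₀) ∘L Ham ∘L (1 - P₀))
    (hHod : Hod = P₀ ∘L Ham ∘L (1 - P₀) + (1 - P₀) ∘L Ham ∘L P₀)
    (T : E →L[ℂ] E)
    (hT : T = ∑' n : ℕ, ((n.factorial : ℂ))⁻¹ • adS^[n] Ham) :
    (P₀ ∘L T ∘L P₀ + (1 - P₀) ∘L T ∘L (1 - P₀) =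
      (∑' k : ℕ, (((2 * k).factorial : ℂ))⁻¹ • adS^[2 * k] Hd) +
      (∑' k : ℕ, (((2 * k + 1).factorial : ℂ))⁻¹ • adS^[2 * k + 1] Hod)) ∧
    (P₀ ∘L T ∘L (1 - P₀) + (1 - P₀) ∘L T ∘L P₀ =
      (∑' k : ℕ, (((2 * k + 1).factorial : ℂ))⁻¹ • adS^[2 * k + 1] Hd) +
      (∑' k : ℕ, (((2 * k).factorial : ℂ))⁻¹ • adS^[2 * k] Hod)) := by
  simp only [← ContinuousLinearMap.mul_def] at hP₀idem hSod hadS hHd hHod ⊢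
  -- basic mul facts
  have hP2 : P₀ * P₀ = P₀ := hP₀idem
  have hSod1 : P₀ * (S * P₀) = 0 := hSod.1
  have hSod2 : (1 - P₀) * (S * (1 - P₀)) = 0 := hSod.2
  -- σ, the parity operator
  set σ : E →L[ℂ] E := P₀ + P₀ - 1 with hσdef
  have hσσ : σ * σ = 1 := by
    have h : σ * σ = ((P₀*P₀)+(P₀*P₀)+(P₀*P₀)+(P₀*P₀)) - (P₀+P₀+P₀+P₀) + 1 := by
      rw [hσdef]; noncomm_ring
    rw [h, hP2]; abel
  have hSsum : P₀ * S + S * P₀ = S := by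
    have e : P₀ * S + S * P₀ = S - ((1-P₀) * (S * (1-P₀))) + P₀ * (S * P₀) := by
      noncomm_ring
    rw [e, hSod1, hSod2]; abel
  have hσS : σ * S * σ = -S := by
    have h : σ * S * σ =
        ((P₀*(S*P₀))+(P₀*(S*P₀))+(P₀*(S*P₀))+(P₀*(S*P₀)))
          - ((P₀*S + S*P₀) + (P₀*S + S*P₀)) + S := by
      rw [hσdef]; noncomm_ring
    rw [h, hSod1, hSsum]; abel
  have hσP : σ * P₀ = P₀ := by
    have h : σ * P₀ = (P₀*P₀) + (P₀*P₀) - P₀ := by rw [hσdef]; noncomm_ring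
    rw [h, hP2]; abel
  have hPσ : P₀ * σ = P₀ := by
    have h : P₀ * σ = (P₀*P₀) + (P₀*P₀) - P₀ := by rw [hσdef]; noncomm_ring
    rw [h, hP2]; abel
  have hσQ : σ * (1 - P₀) = -(1 - P₀) := by
    have h : σ * (1 - P₀) = σ - σ * P₀ := by noncomm_ring
    rw [h, hσP, hσdef]; abel
  have hQσ : (1 - P₀) * σ = -(1 - P₀) := by
    have h : (1 - P₀) * σ = σ - P₀ * σ := by noncomm_ring
    rw [h, hPσ, hσdef]; abel
  -- conjugation invariance of diagonal/offdiagonal parts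
  have hσHd : σ * Hd * σ = Hd := by
    rw [hHd]
    have h : σ * ((P₀ * (Ham * P₀)) + ((1-P₀) * (Ham * (1-P₀)))) * σ
        = (σ*P₀) * (Ham * (P₀*σ)) + (σ*(1-P₀)) * (Ham * ((1-P₀)*σ)) := by
      noncomm_ring
    rw [h, hσP, hPσ, hσQ, hQσ]
    noncomm_ring
  have hσHod : σ * Hod * σ = -Hod := by
    rw [hHod]
    have h : σ * ((P₀ * (Ham * (1-P₀))) + ((1-P₀) * (Ham * P₀))) * σ
        = (σ*P₀) * (Ham * ((1-P₀)*σ)) + (σ*(1-P₀)) * (Ham * (P₀*σ)) := by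
      noncomm_ring
    rw [h, hσP, hPσ, hσQ, hQσ]
    noncomm_ring
  have hHsum : Hd + Hod = Ham := by
    rw [hHd, hHod]
    have : (P₀ * (Ham * P₀) + (1-P₀) * (Ham * (1-P₀)))
        + (P₀ * (Ham * (1-P₀)) + (1-P₀) * (Ham * P₀)) = Ham := by noncomm_ring
    exact this
  -- the ad_S operator as a CLM and its powers
  let L : (E →L[ℂ] E) →L[ℂ] (E →L[ℂ] E) := ContinuousLinearMap.mul ℂ (E →L[ℂ] E) S - (ContinuousLinearMap.mul ℂ (E →L[ℂ] E)).flip S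
  have hL : ∀ X : E →L[ℂ] E, L X = S * X - X * S := fun X => by
    simp [L, ContinuousLinearMap.mul_apply']
  have hiter : ∀ (n : ℕ) (X : E →L[ℂ] E), adS^[n] X = (L ^ n) X := by
    intro n
    induction n with
    | zero => intro X; simp
    | succ n ih =>
      intro X
      rw [Function.iterate_succ_apply, hadS, ih, pow_succ, ContinuousLinearMap.mul_apply, hL]
  -- sign of conjugation on iterates
  have conj_mul : ∀ X Y : E →L[ℂ] E, σ * (X * Y) * σ = (σ * X * σ) * (σ * Y * σ) := by
    intro X Y
    have h : (σ*X*σ) * (σ*Y*σ) = σ * X * (σ*σ) * Y * σ := by noncomm_ring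
    rw [h, hσσ]
    noncomm_ring
  have conj_pow : ∀ (n : ℕ) (ε : ℂ) (X : E →L[ℂ] E), σ * X * σ = ε • X →
      σ * ((L ^ n) X) * σ = ((-1 : ℂ)^n * ε) • (L ^ n) X := by
    intro n
    induction n with
    | zero => intro ε X hX; simpa using hX
    | succ n ih =>
      intro ε X hX
      have hY := ih ε X hX
      set Y := (L ^ n) X with hYdef
      have hpow : (L ^ (n+1)) X = S * Y - Y * S := by
        rw [pow_succ', ContinuousLinearMap.mul_apply, hL, hYdef]
      rw [hpow]
      have hsplit : σ * (S * Y - Y * S) * σ = σ * (S * Y) * σ - σ * (Y * S) * σ := by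
        noncomm_ring
      rw [hsplit, conj_mul, conj_mul, hσS, hY]
      simp only [neg_mul, mul_neg, smul_mul_assoc, mul_smul_comm, smul_sub, smul_smul,
        pow_succ, smul_neg, sub_neg_eq_add]
      module
  -- halving identities
  have half_d : ∀ X : E →L[ℂ] E,
      (2:ℂ) • (P₀ * (X * P₀) + (1 - P₀) * (X * (1 - P₀))) = X + σ * X * σ := by
    intro X
    have h : X + σ * X * σ
        = (P₀ * (X * P₀) + (1 - P₀) * (X * (1 - P₀)))
          + (P₀ * (X * P₀) + (1 - P₀) * (X * (1 - P₀))) := by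
      rw [hσdef]; noncomm_ring
    rw [two_smul, h]
  have half_o : ∀ X : E →L[ℂ] E,
      (2:ℂ) • (P₀ * (X * (1 - P₀)) + (1 - P₀) * (X * P₀)) = X - σ * X * σ := by
    intro X
    have h : X - σ * X * σ
        = (P₀ * (X * (1 - P₀)) + (1 - P₀) * (X * P₀))
          + (P₀ * (X * (1 - P₀)) + (1 - P₀) * (X * P₀)) := by
      rw [hσdef]; noncomm_ring
    rw [two_smul, h]
  -- summability
  have hexp : Summable fun n : ℕ => ((n.factorial : ℂ))⁻¹ • L ^ n := by
    simpa using NormedSpace.expSeries_summable' (𝕂 := ℂ) L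
  have hsA : ∀ X : E →L[ℂ] E,
      Summable fun n : ℕ => ((n.factorial : ℂ))⁻¹ • (L ^ n) X := by
    intro X
    have := hexp.map (ContinuousLinearMap.apply ℂ (E →L[ℂ] E) X)
      (ContinuousLinearMap.apply ℂ (E →L[ℂ] E) X).continuous
    exact this.congr fun n => by simp
  -- the conjugation operator
  let C : (E →L[ℂ] E) →L[ℂ] (E →L[ℂ] E) :=
    (ContinuousLinearMap.mul ℂ (E →L[ℂ] E) σ).comp
      ((ContinuousLinearMap.mul ℂ (E →L[ℂ] E)).flip σ)
  have hC : ∀ X : E →L[ℂ] E, C X = σ * X * σ := fun X => by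
    simp [C, ContinuousLinearMap.mul_apply', mul_assoc]
  -- abbreviations
  set a : ℕ → E →L[ℂ] E := fun n => ((n.factorial : ℂ))⁻¹ • (L ^ n) Hd with ha
  set b : ℕ → E →L[ℂ] E := fun n => ((n.factorial : ℂ))⁻¹ • (L ^ n) Hod with hb
  set t : ℕ → E →L[ℂ] E := fun n => ((n.factorial : ℂ))⁻¹ • (L ^ n) Ham with ht
  have hsa : Summable a := hsA Hd
  have hsb : Summable b := hsA Hod
  have hst : Summable t := hsA Ham
  have hsCt : Summable fun n => C (t n) := hst.map C C.continuous
  have hinj : Function.Injective (fun k : ℕ => 2 * k) := fun x y h => by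
    dsimp only at h; omega
  have hinj' : Function.Injective (fun k : ℕ => 2 * k + 1) := fun x y h => by
    dsimp only at h; omega
  have hTeq : T = ∑' n, t n := by
    rw [hT]; exact tsum_congr fun n => by rw [hiter, ht]
  have hsplitn : ∀ n : ℕ, (L ^ n) Ham = (L ^ n) Hd + (L ^ n) Hod := fun n => by
    rw [← map_add, hHsum]
  have hCd : ∀ n : ℕ, σ * ((L ^ n) Hd) * σ = ((-1:ℂ)^n) • (L ^ n) Hd := fun n => by
    simpa using conj_pow n 1 Hd (by rw [hσHd, one_smul])
  have hCo : ∀ n : ℕ, σ * ((L ^ n) Hod) * σ = (-((-1:ℂ)^n)) • (L ^ n) Hod := fun n => by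
    have := conj_pow n (-1) Hod (by rw [hσHod, neg_one_smul])
    simpa [mul_neg_one] using this
  have hCt : ∀ n : ℕ, C (t n)
      = ((-1:ℂ)^n) • a n - ((-1:ℂ)^n) • b n := by
    intro n
    have h1 : C (t n) = ((n.factorial : ℂ))⁻¹ •
        (σ * ((L ^ n) Hd) * σ + σ * ((L ^ n) Hod) * σ) := by
      rw [hC, ht]
      simp only [hsplitn n, smul_add, mul_add, add_mul, smul_mul_assoc, mul_smul_comm]
    rw [h1, hCd n, hCo n, ha, hb]
    simp only [smul_add, smul_smul, smul_sub, neg_smul, smul_neg]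
    module
  have htn : ∀ n : ℕ, t n = a n + b n := by
    intro n
    rw [ht, ha, hb]
    simp only [hsplitn n, smul_add]
  -- the even/odd functions
  set F : ℕ → E →L[ℂ] E := fun n => t n + C (t n) with hF
  set G : ℕ → E →L[ℂ] E := fun n => t n - C (t n) with hG
  have hsF : Summable F := hst.add hsCt
  have hsG : Summable G := hst.sub hsCt
  have hFe : ∀ k : ℕ, F (2 * k) = (2:ℂ) • a (2 * k) := by
    intro k
    have h1 : ((-1:ℂ))^(2*k) = 1 := (even_two_mul k).neg_one_pow
    show t (2*k) + C (t (2*k)) = _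
    rw [hCt, htn, h1]
    simp only [one_smul]
    rw [two_smul]; abel
  have hFo : ∀ k : ℕ, F (2 * k + 1) = (2:ℂ) • b (2 * k + 1) := by
    intro k
    have h1 : ((-1:ℂ))^(2*k+1) = -1 := (odd_two_mul_add_one k).neg_one_pow
    show t (2*k+1) + C (t (2*k+1)) = _
    rw [hCt, htn, h1]
    simp only [neg_one_smul, sub_neg_eq_add]
    rw [two_smul]; abel
  have hGe : ∀ k : ℕ, G (2 * k) = (2:ℂ) • b (2 * k) := by
    intro k
    have h1 : ((-1:ℂ))^(2*k) = 1 := (even_two_mul k).neg_one_pow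
    show t (2*k) - C (t (2*k)) = _
    rw [hCt, htn, h1]
    simp only [one_smul]
    rw [two_smul]; abel
  have hGo : ∀ k : ℕ, G (2 * k + 1) = (2:ℂ) • a (2 * k + 1) := by
    intro k
    have h1 : ((-1:ℂ))^(2*k+1) = -1 := (odd_two_mul_add_one k).neg_one_pow
    show t (2*k+1) - C (t (2*k+1)) = _
    rw [hCt, htn, h1]
    simp only [neg_one_smul, sub_neg_eq_add]
    rw [two_smul]; abel
  have hsae : Summable fun k : ℕ => a (2 * k) := hsa.comp_injective hinj
  have hsao : Summable fun k : ℕ => a (2 * k + 1) := hsa.comp_injective hinj'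
  have hsbe : Summable fun k : ℕ => b (2 * k) := hsb.comp_injective hinj
  have hsbo : Summable fun k : ℕ => b (2 * k + 1) := hsb.comp_injective hinj'
  -- tsum computations
  have hFsum : ∑' n, F n = (2:ℂ) • ((∑' k, a (2 * k)) + ∑' k, b (2 * k + 1)) := by
    rw [← tsum_even_add_odd (hsF.comp_injective hinj) (hsF.comp_injective hinj')]
    rw [tsum_congr hFe, tsum_congr hFo,
      Summable.tsum_const_smul _ hsae, Summable.tsum_const_smul _ hsbo, smul_add]
  have hGsum : ∑' n, G n = (2:ℂ) • ((∑' k, a (2 * k + 1)) + ∑' k, b (2 * k)) := by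
    rw [← tsum_even_add_odd (hsG.comp_injective hinj) (hsG.comp_injective hinj')]
    rw [tsum_congr hGe, tsum_congr hGo,
      Summable.tsum_const_smul _ hsbe, Summable.tsum_const_smul _ hsao, smul_add, add_comm]
  have hTC : T + σ * T * σ = ∑' n, F n := by
    rw [← hC, hTeq, C.map_tsum hst, ← Summable.tsum_add hst hsCt]
  have hTC' : T - σ * T * σ = ∑' n, G n := by
    rw [← hC, hTeq, C.map_tsum hst, ← Summable.tsum_sub hst hsCt]
  -- rewrite the goal sums
  have e1 : (∑' k : ℕ, (((2 * k).factorial : ℂ))⁻¹ • adS^[2 * k] Hd) = ∑' k, a (2 * k) :=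
    tsum_congr fun k => by rw [hiter, ha]
  have e2 : (∑' k : ℕ, (((2 * k + 1).factorial : ℂ))⁻¹ • adS^[2 * k + 1] Hod)
      = ∑' k, b (2 * k + 1) := tsum_congr fun k => by rw [hiter, hb]
  have e3 : (∑' k : ℕ, (((2 * k + 1).factorial : ℂ))⁻¹ • adS^[2 * k + 1] Hd)
      = ∑' k, a (2 * k + 1) := tsum_congr fun k => by rw [hiter, ha]
  have e4 : (∑' k : ℕ, (((2 * k).factorial : ℂ))⁻¹ • adS^[2 * k] Hod)
      = ∑' k, b (2 * k) := tsum_congr fun k => by rw [hiter, hb]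
  constructor
  · rw [e1, e2]
    apply smul_right_injective (E →L[ℂ] E) (two_ne_zero (α := ℂ))
    dsimp only
    rw [half_d T, hTC, hFsum]
  · rw [e3, e4]
    apply smul_right_injective (E →L[ℂ] E) (two_ne_zero (α := ℂ))
    dsimp only
    rw [half_o T, hTC', hGsum]
end

section
/- Local inverse of ad_{H₀}: let H₀ be positive semidefinite with ground-state projector P₀ (H₀P₀ = 0) and spectral gap Δ > 0 (H₀ ≥ Δ on range(Q₀), Q₀ = I - P₀). Define L(X) = ∫₀^∞ e^{-tH₀} Q₀ X P₀ dt - ∫₀^∞ P₀ X Q₀ e^{-tH₀} dt. Then the integrals converge, ‖L(X)‖ ≤ ‖X‖/Δ, and L([H₀, X]) = [H₀, L(X)] = P₀XQ₀ + Q₀XP₀ for every operator X. -/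
open ContinuousLinearMap MeasureTheory
open scoped ComplexInnerProductSpace

section Aux
variable {H : Type*} [NormedAddCommGroup H] [InnerProductSpace ℂ H] [FiniteDimensional ℂ H]

lemma stmt18_exp_mul_eq (A C : H →L[ℂ] H) (h : A * C = 0) :
    NormedSpace.exp A * C = C := by
  rw [NormedSpace.exp_eq_tsum ℂ]
  rw [← (NormedSpace.expSeries_summable' (𝕂 := ℂ) A).tsum_mul_right C]
  rw [tsum_eq_single 0]
  · simp
  · intro n hn
    obtain ⟨m, rfl⟩ := Nat.exists_eq_succ_of_ne_zero hn
    rw [smul_mul_assoc, pow_succ, mul_assoc, h, mul_zero, smul_zero]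

lemma stmt18_mul_exp_eq (A C : H →L[ℂ] H) (h : C * A = 0) :
    C * NormedSpace.exp A = C := by
  rw [NormedSpace.exp_eq_tsum ℂ]
  rw [← (NormedSpace.expSeries_summable' (𝕂 := ℂ) A).tsum_mul_left C]
  rw [tsum_eq_single 0]
  · simp
  · intro n hn
    obtain ⟨m, rfl⟩ := Nat.exists_eq_succ_of_ne_zero hn
    rw [mul_smul_comm, pow_succ', ← mul_assoc, h, zero_mul, smul_zero]

lemma stmt18_hasDerivAt_exp (B : H →L[ℂ] H) (t : ℝ) :
    HasDerivAt (fun s : ℝ => NormedSpace.exp ((s : ℂ) • B))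
      (NormedSpace.exp ((t : ℂ) • B) * B) t := by
  have h := hasDerivAt_exp_smul_const (𝕂 := ℂ) B ((t : ℝ) : ℂ)
  have h2 := (h.hasFDerivAt.restrictScalars ℝ).comp t Complex.ofRealCLM.hasFDerivAt
  have h3 := h2.hasDerivAt
  simpa [Function.comp_def] using h3

lemma stmt18_hasDerivAt_exp' (B : H →L[ℂ] H) (t : ℝ) :
    HasDerivAt (fun s : ℝ => NormedSpace.exp ((s : ℂ) • B))
      (B * NormedSpace.exp ((t : ℂ) • B)) t := by
  have h := hasDerivAt_exp_smul_const' (𝕂 := ℂ) B ((t : ℝ) : ℂ)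
  have h2 := (h.hasFDerivAt.restrictScalars ℝ).comp t Complex.ofRealCLM.hasFDerivAt
  have h3 := h2.hasDerivAt
  simpa [Function.comp_def] using h3

lemma stmt18_exp_continuous (B : H →L[ℂ] H) :
    Continuous (fun s : ℝ => NormedSpace.exp ((s : ℂ) • B)) :=
  continuous_iff_continuousAt.2 fun t => (stmt18_hasDerivAt_exp B t).continuousAt

end Aux
section Aux2
variable {H : Type*} [NormedAddCommGroup H] [InnerProductSpace ℂ H] [FiniteDimensional ℂ H]
variable {H₀ P₀ : H →L[ℂ] H}

lemma stmt18_decay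
    (hH₀sa : ContinuousLinearMap.adjoint H₀ = H₀)
    (hP₀H₀ : P₀ * H₀ = 0) (hH₀P₀ : H₀ * P₀ = 0)
    {Δ : ℝ} (hΔ : 0 < Δ)
    (hgap : ∀ x : H, P₀ x = 0 → Δ * ‖x‖ ^ 2 ≤ ((⟪x, H₀ x⟫ : ℂ)).re)
    {t : ℝ} (ht : 0 ≤ t) {y : H} (hy : P₀ y = 0) :
    ‖NormedSpace.exp ((t : ℂ) • (-H₀)) y‖ ≤ Real.exp (-(Δ * t)) * ‖y‖ := by
  set E : ℝ → (H →L[ℂ] H) := fun s => NormedSpace.exp ((s : ℂ) • (-H₀)) with hEdef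
  have hPE : ∀ s : ℝ, P₀ * E s = P₀ := fun s =>
    stmt18_mul_exp_eq _ _ (by rw [mul_smul_comm, mul_neg, hP₀H₀, neg_zero, smul_zero])
  have hPEy : ∀ s : ℝ, P₀ (E s y) = 0 := by
    intro s
    have := congrArg (fun M => M y) (hPE s)
    simpa [ContinuousLinearMap.mul_apply, hy] using this
  -- derivative of u s = E s y
  have hu : ∀ s : ℝ, HasDerivAt (fun r : ℝ => E r y) (-(H₀ (E s y))) s := by
    intro s
    have h1 := stmt18_hasDerivAt_exp (-H₀) s
    have h2 := (((ContinuousLinearMap.apply ℂ H y).restrictScalars ℝ).hasFDerivAt).comp_hasDerivAt s h1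
    have h3 : HasDerivAt (fun r : ℝ => E r y)
        (((ContinuousLinearMap.apply ℂ H y).restrictScalars ℝ)
          (NormedSpace.exp ((s : ℂ) • (-H₀)) * (-H₀))) s := h2
    have hc : NormedSpace.exp ((s : ℂ) • (-H₀)) * (-H₀) = -H₀ * E s :=
      (((Commute.refl (-H₀)).smul_left ((s:ℂ))).exp_left).eq
    rw [hc] at h3
    have hval : ((ContinuousLinearMap.apply ℂ H y).restrictScalars ℝ) (-H₀ * E s)
        = -(H₀ (E s y)) := by
      simp [ContinuousLinearMap.mul_apply]
    rwa [hval] at h3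
  -- the function g
  set g : ℝ → ℝ := fun s => Real.exp (2 * Δ * s) * Complex.re ⟪E s y, E s y⟫ with hgdef
  have hg : ∀ s : ℝ, HasDerivAt g
      (Real.exp (2 * Δ * s) * (2 * Δ) * Complex.re ⟪E s y, E s y⟫ +
        Real.exp (2 * Δ * s) * Complex.re (⟪E s y, -(H₀ (E s y))⟫ + ⟪-(H₀ (E s y)), E s y⟫)) s := by
    intro s
    have h1 : HasDerivAt (fun r : ℝ => Real.exp (2 * Δ * r)) (Real.exp (2 * Δ * s) * (2 * Δ)) s := by
      simpa using ((hasDerivAt_id s).const_mul (2 * Δ)).exp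
    have h2 := HasDerivAt.inner ℂ (hu s) (hu s)
    have h3 := (Complex.reCLM.hasFDerivAt).comp_hasDerivAt s h2
    exact h1.mul h3
  have hgderiv : ∀ s : ℝ, deriv g s ≤ 0 := by
    intro s
    rw [(hg s).deriv]
    have hinner : Complex.re (⟪E s y, -(H₀ (E s y))⟫ + ⟪-(H₀ (E s y)), E s y⟫)
        = -(2 * Complex.re ⟪E s y, H₀ (E s y)⟫) := by
      rw [inner_neg_right, inner_neg_left, Complex.add_re, Complex.neg_re, Complex.neg_re]
      have : (⟪H₀ (E s y), E s y⟫ : ℂ) = ⟪E s y, H₀ (E s y)⟫ := by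
        conv_lhs => rw [← hH₀sa]
        rw [ContinuousLinearMap.adjoint_inner_left]
      rw [this]; ring
    rw [hinner]
    have hge := hgap (E s y) (hPEy s)
    have hnn : Complex.re ⟪E s y, E s y⟫ = ‖E s y‖ ^ 2 := inner_self_eq_norm_sq (𝕜 := ℂ) _
    rw [hnn]
    have hexp : (0:ℝ) < Real.exp (2 * Δ * s) := Real.exp_pos _
    nlinarith [hexp]
  have hmono : AntitoneOn g (Set.Ici (0:ℝ)) := by
    apply antitoneOn_of_deriv_nonpos (convex_Ici 0)
    · exact fun x _ => (hg x).continuousAt.continuousWithinAt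
    · exact fun x _ => (hg x).differentiableAt.differentiableWithinAt
    · exact fun x _ => hgderiv x
  have hg0 : g 0 = ‖y‖ ^ 2 := by
    have hE0 : E 0 = 1 := by simp [hEdef, NormedSpace.exp_zero]
    simp only [hgdef, hE0, mul_zero, Real.exp_zero, one_mul, ContinuousLinearMap.one_apply]
    exact inner_self_eq_norm_sq (𝕜 := ℂ) y
  have hgt := hmono (Set.self_mem_Ici) (Set.mem_Ici.2 ht) ht
  rw [hg0] at hgt
  have hnormsq : Real.exp (2 * Δ * t) * ‖E t y‖ ^ 2 ≤ ‖y‖ ^ 2 := by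
    have : Complex.re ⟪E t y, E t y⟫ = ‖E t y‖ ^ 2 := inner_self_eq_norm_sq (𝕜 := ℂ) _
    rw [hgdef] at hgt; dsimp at hgt; rw [this] at hgt; exact hgt
  have key : ‖E t y‖ ^ 2 ≤ (Real.exp (-(Δ * t)) * ‖y‖) ^ 2 := by
    have h1 : (Real.exp (-(Δ * t)))^2 = (Real.exp (2 * Δ * t))⁻¹ := by
      rw [← Real.exp_nat_mul]
      rw [← Real.exp_neg]
      congr 1; ring
    rw [mul_pow, h1]
    rw [inv_mul_eq_div, le_div_iff₀ (Real.exp_pos _)]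
    nlinarith [hnormsq]
  have h2 := Real.sqrt_le_sqrt key
  rwa [Real.sqrt_sq (norm_nonneg _), Real.sqrt_sq (by positivity)] at h2



lemma stmt18_pyth (hP₀ : ContinuousLinearMap.adjoint P₀ = P₀) (hP₀idem : P₀ * P₀ = P₀)
    (v : H) : ‖P₀ v‖ ^ 2 + ‖v - P₀ v‖ ^ 2 = ‖v‖ ^ 2 := by
  have hz : P₀ (v - P₀ v) = 0 := by
    have := congrArg (fun M => M v) hP₀idem
    simp only [ContinuousLinearMap.mul_apply] at this
    simp [map_sub, this]
  have horth : (⟪P₀ v, v - P₀ v⟫ : ℂ) = 0 := by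
    calc (⟪P₀ v, v - P₀ v⟫ : ℂ)
        = ⟪ContinuousLinearMap.adjoint P₀ v, v - P₀ v⟫ := by rw [hP₀]
      _ = ⟪v, P₀ (v - P₀ v)⟫ := ContinuousLinearMap.adjoint_inner_left P₀ _ _
      _ = 0 := by rw [hz, inner_zero_right]
  have := norm_add_sq (𝕜 := ℂ) (P₀ v) (v - P₀ v)
  simp only [add_sub_cancel, horth, map_zero, mul_zero, add_zero] at this
  linarith [this]

lemma stmt18_decayL
    (hH₀sa : ContinuousLinearMap.adjoint H₀ = H₀)
    (hP₀H₀ : P₀ * H₀ = 0) (hH₀P₀ : H₀ * P₀ = 0)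
    {Δ : ℝ} (hΔ : 0 < Δ)
    (hgap : ∀ x : H, P₀ x = 0 → Δ * ‖x‖ ^ 2 ≤ ((⟪x, H₀ x⟫ : ℂ)).re)
    (M : H →L[ℂ] H) (hM : P₀ * M = 0) {t : ℝ} (ht : 0 ≤ t) :
    ‖NormedSpace.exp ((t : ℂ) • (-H₀)) * M‖ ≤ Real.exp (-(Δ * t)) * ‖M‖ := by
  apply ContinuousLinearMap.opNorm_le_bound _ (by positivity)
  intro v
  have hPMv : P₀ (M v) = 0 := by
    have := congrArg (fun N => N v) hM
    simpa using this
  have h1 := stmt18_decay hH₀sa hP₀H₀ hH₀P₀ hΔ hgap ht hPMv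
  calc ‖(NormedSpace.exp ((t : ℂ) • (-H₀)) * M) v‖
      = ‖NormedSpace.exp ((t : ℂ) • (-H₀)) (M v)‖ := rfl
    _ ≤ Real.exp (-(Δ * t)) * ‖M v‖ := h1
    _ ≤ Real.exp (-(Δ * t)) * (‖M‖ * ‖v‖) := by
        exact mul_le_mul_of_nonneg_left (M.le_opNorm v) (Real.exp_nonneg _)
    _ = Real.exp (-(Δ * t)) * ‖M‖ * ‖v‖ := by ring

lemma stmt18_decayR
    (hH₀sa : ContinuousLinearMap.adjoint H₀ = H₀)
    (hP₀ : ContinuousLinearMap.adjoint P₀ = P₀) (hP₀idem : P₀ * P₀ = P₀)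
    (hP₀H₀ : P₀ * H₀ = 0) (hH₀P₀ : H₀ * P₀ = 0)
    {Δ : ℝ} (hΔ : 0 < Δ)
    (hgap : ∀ x : H, P₀ x = 0 → Δ * ‖x‖ ^ 2 ≤ ((⟪x, H₀ x⟫ : ℂ)).re)
    (M : H →L[ℂ] H) (hM : M * P₀ = 0) {t : ℝ} (ht : 0 ≤ t) :
    ‖M * NormedSpace.exp ((t : ℂ) • (-H₀))‖ ≤ Real.exp (-(Δ * t)) * ‖M‖ := by
  set E : ℝ → (H →L[ℂ] H) := fun s => NormedSpace.exp ((s : ℂ) • (-H₀)) with hEdef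
  have hPE : P₀ * E t = P₀ :=
    stmt18_mul_exp_eq _ _ (by rw [mul_smul_comm, mul_neg, hP₀H₀, neg_zero, smul_zero])
  have hEP : E t * P₀ = P₀ :=
    stmt18_exp_mul_eq _ _ (by rw [smul_mul_assoc, neg_mul, hH₀P₀, neg_zero, smul_zero])
  apply ContinuousLinearMap.opNorm_le_bound _ (by positivity)
  intro v
  have hsplit : M (E t v) = M (E t (v - P₀ v)) := by
    have h1 : E t v = E t (v - P₀ v) + P₀ v := by
      have : E t (P₀ v) = P₀ v := by
        have := congrArg (fun N => N v) hEP
        simpa using this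
      rw [map_sub, this]; abel
    rw [h1, map_add]
    have : M (P₀ v) = 0 := by
      have := congrArg (fun N => N v) hM
      simpa using this
    rw [this, add_zero]
  have hPv : P₀ (v - P₀ v) = 0 := by
    have := congrArg (fun N => N v) hP₀idem
    simp only [ContinuousLinearMap.mul_apply] at this
    simp [map_sub, this]
  have hd := stmt18_decay hH₀sa hP₀H₀ hH₀P₀ hΔ hgap ht hPv
  have hQv : ‖v - P₀ v‖ ≤ ‖v‖ := by
    have := stmt18_pyth hP₀ hP₀idem v
    have h2 : ‖v - P₀ v‖ ^ 2 ≤ ‖v‖ ^ 2 := by nlinarith [norm_nonneg (P₀ v)]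
    have h3 := Real.sqrt_le_sqrt h2
    rwa [Real.sqrt_sq (norm_nonneg _), Real.sqrt_sq (norm_nonneg _)] at h3
  calc ‖(M * E t) v‖ = ‖M (E t (v - P₀ v))‖ := by rw [ContinuousLinearMap.mul_apply, hsplit]
    _ ≤ ‖M‖ * ‖E t (v - P₀ v)‖ := M.le_opNorm _
    _ ≤ ‖M‖ * (Real.exp (-(Δ * t)) * ‖v - P₀ v‖) :=
        mul_le_mul_of_nonneg_left hd (norm_nonneg _)
    _ ≤ ‖M‖ * (Real.exp (-(Δ * t)) * ‖v‖) := by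
        have := mul_le_mul_of_nonneg_left hQv (Real.exp_nonneg (-(Δ * t)))
        exact mul_le_mul_of_nonneg_left this (norm_nonneg _)
    _ = Real.exp (-(Δ * t)) * ‖M‖ * ‖v‖ := by ring

lemma stmt18_integrable {Δ : ℝ} (hΔ : 0 < Δ) (c : ℝ) (f : ℝ → (H →L[ℂ] H))
    (hcont : Continuous f) (hbd : ∀ t : ℝ, 0 ≤ t → ‖f t‖ ≤ Real.exp (-(Δ * t)) * c) :
    IntegrableOn f (Set.Ioi (0:ℝ)) := by
  have hg : IntegrableOn (fun t : ℝ => Real.exp (-(Δ * t)) * c) (Set.Ioi (0:ℝ)) := by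
    simpa [neg_mul, IntegrableOn] using (exp_neg_integrableOn_Ioi 0 hΔ).mul_const c
  refine Integrable.mono' hg (hcont.aestronglyMeasurable.restrict) ?_
  rw [ae_restrict_iff' measurableSet_Ioi]
  exact ae_of_all _ fun t ht => hbd t (le_of_lt ht)

lemma stmt18_intexp {Δ : ℝ} (hΔ : 0 < Δ) :
    ∫ t in Set.Ioi (0:ℝ), Real.exp (-(Δ * t)) = Δ⁻¹ := by
  have key := integral_Ioi_of_hasDerivAt_of_tendsto'
    (f := fun t : ℝ => -Δ⁻¹ * Real.exp (-(Δ * t)))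
    (f' := fun t : ℝ => Real.exp (-(Δ * t))) (a := 0) (m := 0)
    ?_ ?_ ?_
  · rw [key]; simp
  · intro x _
    have h1 : HasDerivAt (fun t : ℝ => Real.exp (-(Δ * t))) (Real.exp (-(Δ * x)) * (-Δ)) x := by
      simpa using (((hasDerivAt_id x).const_mul Δ).neg).exp
    have h2 := h1.const_mul (-Δ⁻¹)
    have : -Δ⁻¹ * (Real.exp (-(Δ * x)) * (-Δ)) = Real.exp (-(Δ * x)) := by
      field_simp
    rwa [this] at h2
  · simpa [neg_mul] using (exp_neg_integrableOn_Ioi 0 hΔ)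
  · have h1 : Filter.Tendsto (fun t : ℝ => -(Δ * t)) Filter.atTop Filter.atBot := by
      exact Filter.tendsto_neg_atTop_atBot.comp (Filter.Tendsto.const_mul_atTop hΔ Filter.tendsto_id)
    have h2 := Real.tendsto_exp_atBot.comp h1
    simpa using h2.const_mul (-Δ⁻¹)



lemma stmt18_tendsto_exp_aux {Δ : ℝ} (hΔ : 0 < Δ) (c : ℝ) :
    Filter.Tendsto (fun t : ℝ => Real.exp (-(Δ * t)) * c) Filter.atTop (nhds 0) := by
  have h1 : Filter.Tendsto (fun t : ℝ => -(Δ * t)) Filter.atTop Filter.atBot :=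
    Filter.tendsto_neg_atTop_atBot.comp (Filter.Tendsto.const_mul_atTop hΔ Filter.tendsto_id)
  simpa using (Real.tendsto_exp_atBot.comp h1).mul_const c

lemma stmt18_ftcL
    (hH₀sa : ContinuousLinearMap.adjoint H₀ = H₀)
    (hP₀H₀ : P₀ * H₀ = 0) (hH₀P₀ : H₀ * P₀ = 0)
    {Δ : ℝ} (hΔ : 0 < Δ)
    (hgap : ∀ x : H, P₀ x = 0 → Δ * ‖x‖ ^ 2 ≤ ((⟪x, H₀ x⟫ : ℂ)).re)
    (N : H →L[ℂ] H) (hN : P₀ * N = 0) :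
    ∫ t in Set.Ioi (0:ℝ), NormedSpace.exp ((t : ℂ) • (-H₀)) * (H₀ * N) = N := by
  have hint : IntegrableOn
      (fun t : ℝ => NormedSpace.exp ((t : ℂ) • (-H₀)) * (H₀ * N)) (Set.Ioi (0:ℝ)) := by
    apply stmt18_integrable hΔ ‖H₀ * N‖
    · exact (stmt18_exp_continuous (-H₀)).mul continuous_const
    · intro t ht
      exact stmt18_decayL hH₀sa hP₀H₀ hH₀P₀ hΔ hgap (H₀ * N)
        (by rw [← mul_assoc, hP₀H₀, zero_mul]) ht
  have hderiv : ∀ x ∈ Set.Ici (0:ℝ),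
      HasDerivAt (fun t : ℝ => -(NormedSpace.exp ((t : ℂ) • (-H₀)) * N))
        (NormedSpace.exp ((x : ℂ) • (-H₀)) * (H₀ * N)) x := by
    intro x _
    have h2 := ((stmt18_hasDerivAt_exp (-H₀) x).mul_const N).neg
    have hval : -(NormedSpace.exp ((x : ℂ) • (-H₀)) * (-H₀) * N)
        = NormedSpace.exp ((x : ℂ) • (-H₀)) * (H₀ * N) := by
      rw [mul_neg, neg_mul, neg_neg, mul_assoc]
    rwa [hval] at h2
  have htend : Filter.Tendsto (fun t : ℝ => -(NormedSpace.exp ((t : ℂ) • (-H₀)) * N))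
      Filter.atTop (nhds 0) := by
    apply squeeze_zero_norm' (a := fun t : ℝ => Real.exp (-(Δ * t)) * ‖N‖)
    · filter_upwards [Filter.Ici_mem_atTop (0:ℝ)] with t ht
      rw [norm_neg]
      exact stmt18_decayL hH₀sa hP₀H₀ hH₀P₀ hΔ hgap N hN ht
    · exact stmt18_tendsto_exp_aux hΔ ‖N‖
  have key := integral_Ioi_of_hasDerivAt_of_tendsto' hderiv hint htend
  rw [key]
  simp [NormedSpace.exp_zero]

lemma stmt18_ftcR
    (hH₀sa : ContinuousLinearMap.adjoint H₀ = H₀)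
    (hP₀ : ContinuousLinearMap.adjoint P₀ = P₀) (hP₀idem : P₀ * P₀ = P₀)
    (hP₀H₀ : P₀ * H₀ = 0) (hH₀P₀ : H₀ * P₀ = 0)
    {Δ : ℝ} (hΔ : 0 < Δ)
    (hgap : ∀ x : H, P₀ x = 0 → Δ * ‖x‖ ^ 2 ≤ ((⟪x, H₀ x⟫ : ℂ)).re)
    (M : H →L[ℂ] H) (hM : M * P₀ = 0) :
    ∫ t in Set.Ioi (0:ℝ), (M * H₀) * NormedSpace.exp ((t : ℂ) • (-H₀)) = M := by
  have hint0 : IntegrableOn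
      (fun t : ℝ => (M * H₀) * NormedSpace.exp ((t : ℂ) • (-H₀))) (Set.Ioi (0:ℝ)) := by
    apply stmt18_integrable hΔ ‖M * H₀‖
    · exact continuous_const.mul (stmt18_exp_continuous (-H₀))
    · intro t ht
      exact stmt18_decayR hH₀sa hP₀ hP₀idem hP₀H₀ hH₀P₀ hΔ hgap (M * H₀)
        (by rw [mul_assoc, hH₀P₀, mul_zero]) ht
  have hint : IntegrableOn
      (fun t : ℝ => -((M * H₀) * NormedSpace.exp ((t : ℂ) • (-H₀)))) (Set.Ioi (0:ℝ)) :=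
    hint0.neg
  have hderiv : ∀ x ∈ Set.Ici (0:ℝ),
      HasDerivAt (fun t : ℝ => M * NormedSpace.exp ((t : ℂ) • (-H₀)))
        (-((M * H₀) * NormedSpace.exp ((x : ℂ) • (-H₀)))) x := by
    intro x _
    have h1 := (stmt18_hasDerivAt_exp' (-H₀) x).const_mul M
    have hval : M * ((-H₀) * NormedSpace.exp ((x : ℂ) • (-H₀)))
        = -((M * H₀) * NormedSpace.exp ((x : ℂ) • (-H₀))) := by
      rw [neg_mul, mul_neg, ← mul_assoc]
    rwa [hval] at h1
  have htend : Filter.Tendsto (fun t : ℝ => M * NormedSpace.exp ((t : ℂ) • (-H₀)))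
      Filter.atTop (nhds 0) := by
    apply squeeze_zero_norm' (a := fun t : ℝ => Real.exp (-(Δ * t)) * ‖M‖)
    · filter_upwards [Filter.Ici_mem_atTop (0:ℝ)] with t ht
      exact stmt18_decayR hH₀sa hP₀ hP₀idem hP₀H₀ hH₀P₀ hΔ hgap M hM ht
    · exact stmt18_tendsto_exp_aux hΔ ‖M‖
  have key := integral_Ioi_of_hasDerivAt_of_tendsto' hderiv hint htend
  rw [integral_neg] at key
  have h0 : M * NormedSpace.exp (((0:ℝ) : ℂ) • (-H₀)) = M := by
    simp [NormedSpace.exp_zero]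
  rw [h0] at key
  have := neg_injective (key.trans (by rw [zero_sub]))
  exact this

end Aux2

set_option maxHeartbeats 1000000 in
theorem stmt18 {H : Type*} [NormedAddCommGroup H] [InnerProductSpace ℂ H]
    [FiniteDimensional ℂ H]
    (H₀ P₀ : H →L[ℂ] H)
    (hH₀sa : ContinuousLinearMap.adjoint H₀ = H₀)
    (hH₀pos : ∀ x : H, 0 ≤ ((⟪x, H₀ x⟫ : ℂ)).re)
    (hP₀ : ContinuousLinearMap.adjoint P₀ = P₀) (hP₀idem : P₀ ∘L P₀ = P₀)
    (hker : ∀ x : H, H₀ x = 0 ↔ P₀ x = x)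
    (Δ : ℝ) (hΔ : 0 < Δ)
    (hgap : ∀ x : H, P₀ x = 0 → Δ * ‖x‖ ^ 2 ≤ ((⟪x, H₀ x⟫ : ℂ)).re)
    (L : (H →L[ℂ] H) → (H →L[ℂ] H))
    (hL : ∀ X, L X =
      (∫ t in Set.Ioi (0 : ℝ),
        (NormedSpace.exp ((-(t : ℂ)) • H₀) ∘L ((1 - P₀) ∘L X ∘L P₀))) -
      (∫ t in Set.Ioi (0 : ℝ),
        ((P₀ ∘L X ∘L (1 - P₀)) ∘L NormedSpace.exp ((-(t : ℂ)) • H₀)))) :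
    ∀ X : H →L[ℂ] H,
      IntegrableOn (fun t : ℝ =>
        NormedSpace.exp ((-(t : ℂ)) • H₀) ∘L ((1 - P₀) ∘L X ∘L P₀))
        (Set.Ioi 0) ∧
      IntegrableOn (fun t : ℝ =>
        (P₀ ∘L X ∘L (1 - P₀)) ∘L NormedSpace.exp ((-(t : ℂ)) • H₀))
        (Set.Ioi 0) ∧
      ‖L X‖ ≤ ‖X‖ / Δ ∧
      L (H₀ ∘L X - X ∘L H₀) = H₀ ∘L L X - L X ∘L H₀ ∧
      L (H₀ ∘L X - X ∘L H₀) = P₀ ∘L X ∘L (1 - P₀) + (1 - P₀) ∘L X ∘L P₀ := by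
  intro X
  -- basic algebraic facts
  have hP₀idem' : P₀ * P₀ = P₀ := hP₀idem
  have hH₀P₀ : H₀ * P₀ = 0 := by
    ext v
    have h1 : P₀ (P₀ v) = P₀ v := by
      have := congrArg (fun M => M v) hP₀idem'
      simpa using this
    have := (hker (P₀ v)).2 h1
    simpa using this
  have hP₀H₀ : P₀ * H₀ = 0 := by
    have h2 : ContinuousLinearMap.adjoint P₀ * ContinuousLinearMap.adjoint H₀
        = ContinuousLinearMap.adjoint (H₀ * P₀) :=
      (ContinuousLinearMap.adjoint_comp H₀ P₀).symm
    rw [hP₀, hH₀sa] at h2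
    rw [h2, hH₀P₀, map_zero]
  have h1z : ∀ Z : H →L[ℂ] H, P₀ * (H₀ * Z) = 0 := fun Z => by
    rw [← mul_assoc, hP₀H₀, zero_mul]
  have h2z : ∀ Z : H →L[ℂ] H, H₀ * (P₀ * Z) = 0 := fun Z => by
    rw [← mul_assoc, hH₀P₀, zero_mul]
  set A : H →L[ℂ] H := (1 - P₀) * (X * P₀) with hAdef
  set B : H →L[ℂ] H := P₀ * (X * (1 - P₀)) with hBdef
  have hPQ : P₀ * (1 - P₀) = 0 := by rw [mul_sub, mul_one, hP₀idem', sub_self]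
  have hQP : (1 - P₀) * P₀ = 0 := by rw [sub_mul, one_mul, hP₀idem', sub_self]
  have hPA : P₀ * A = 0 := by rw [hAdef, ← mul_assoc, hPQ, zero_mul]
  have hBP : B * P₀ = 0 := by
    rw [hBdef, mul_assoc, mul_assoc, hQP, mul_zero, mul_zero]
  have hPB : P₀ * B = B := by rw [hBdef, ← mul_assoc, hP₀idem']
  have hAH : A * H₀ = 0 := by
    rw [hAdef, mul_assoc, mul_assoc, hP₀H₀, mul_zero, mul_zero]
  have hHB : H₀ * B = 0 := by rw [hBdef, ← mul_assoc, hH₀P₀, zero_mul]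
  have hE : ∀ t : ℝ, NormedSpace.exp ((-(t : ℂ)) • H₀)
      = NormedSpace.exp ((t : ℂ) • (-H₀)) := fun t => by rw [neg_smul, smul_neg]
  have hPE : ∀ t : ℝ, P₀ * NormedSpace.exp ((t : ℂ) • (-H₀)) = P₀ := fun t =>
    stmt18_mul_exp_eq _ _ (by rw [mul_smul_comm, mul_neg, hP₀H₀, neg_zero, smul_zero])
  have hEP : ∀ t : ℝ, NormedSpace.exp ((t : ℂ) • (-H₀)) * P₀ = P₀ := fun t =>
    stmt18_exp_mul_eq _ _ (by rw [smul_mul_assoc, neg_mul, hH₀P₀, neg_zero, smul_zero])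
  have hcommE : ∀ t : ℝ, NormedSpace.exp ((t : ℂ) • (-H₀)) * H₀
      = H₀ * NormedSpace.exp ((t : ℂ) • (-H₀)) := fun t =>
    ((((Commute.refl H₀).neg_left).smul_left ((t : ℂ))).exp_left).eq
  -- integrability
  have hI1 : IntegrableOn (fun t : ℝ => NormedSpace.exp ((t : ℂ) • (-H₀)) * A)
      (Set.Ioi (0:ℝ)) := by
    apply stmt18_integrable hΔ ‖A‖
    · exact (stmt18_exp_continuous (-H₀)).mul continuous_const
    · exact fun t ht => stmt18_decayL hH₀sa hP₀H₀ hH₀P₀ hΔ hgap A hPA ht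
  have hI2 : IntegrableOn (fun t : ℝ => B * NormedSpace.exp ((t : ℂ) • (-H₀)))
      (Set.Ioi (0:ℝ)) := by
    apply stmt18_integrable hΔ ‖B‖
    · exact continuous_const.mul (stmt18_exp_continuous (-H₀))
    · exact fun t ht => stmt18_decayR hH₀sa hP₀ hP₀idem' hP₀H₀ hH₀P₀ hΔ hgap B hBP ht
  -- commutator identities
  have hQYP : (1 - P₀) * ((H₀ * X - X * H₀) * P₀) = H₀ * A := by
    rw [hAdef]
    simp [mul_sub, sub_mul, mul_assoc, hH₀P₀, hP₀H₀, h1z, h2z]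
  have hPYQ : P₀ * ((H₀ * X - X * H₀) * (1 - P₀)) = -(B * H₀) := by
    rw [hBdef]
    simp [mul_sub, sub_mul, mul_assoc, hH₀P₀, hP₀H₀, h1z, h2z]
  -- value of L on the commutator
  have hLY : L (H₀ ∘L X - X ∘L H₀) = A + B := by
    rw [hL (H₀ ∘L X - X ∘L H₀)]
    have e1 : (fun t : ℝ => NormedSpace.exp ((-(t : ℂ)) • H₀) ∘L
          ((1 - P₀) ∘L (H₀ ∘L X - X ∘L H₀) ∘L P₀))
        = (fun t : ℝ => NormedSpace.exp ((t : ℂ) • (-H₀)) * (H₀ * A)) :=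
      funext fun t => by
        rw [hE t]
        exact congrArg (fun M => NormedSpace.exp ((t : ℂ) • (-H₀)) * M) hQYP
    have e2 : (fun t : ℝ => (P₀ ∘L (H₀ ∘L X - X ∘L H₀) ∘L (1 - P₀)) ∘L
          NormedSpace.exp ((-(t : ℂ)) • H₀))
        = (fun t : ℝ => -((B * H₀) * NormedSpace.exp ((t : ℂ) • (-H₀)))) :=
      funext fun t => by
        rw [hE t]
        calc (P₀ * ((H₀ * X - X * H₀) * (1 - P₀))) * NormedSpace.exp ((t : ℂ) • (-H₀))
            = (-(B * H₀)) * NormedSpace.exp ((t : ℂ) • (-H₀)) := by rw [hPYQ]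
          _ = -((B * H₀) * NormedSpace.exp ((t : ℂ) • (-H₀))) := by rw [neg_mul]
    rw [e1, e2, integral_neg]
    rw [stmt18_ftcL hH₀sa hP₀H₀ hH₀P₀ hΔ hgap A hPA,
      stmt18_ftcR hH₀sa hP₀ hP₀idem' hP₀H₀ hH₀P₀ hΔ hgap B hBP]
    abel
  -- the two integrals
  set S : H →L[ℂ] H := ∫ t in Set.Ioi (0:ℝ), NormedSpace.exp ((t : ℂ) • (-H₀)) * A with hSdef
  set T : H →L[ℂ] H := ∫ t in Set.Ioi (0:ℝ), B * NormedSpace.exp ((t : ℂ) • (-H₀)) with hTdef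
  have hLX : L X = S - T := by
    rw [hL X]
    simp only [hE]
    rfl
  -- norm bound
  have hPle : ∀ w : H, ‖P₀ w‖ ≤ ‖w‖ := by
    intro w
    have h := stmt18_pyth hP₀ hP₀idem' w
    have h2 : ‖P₀ w‖ ^ 2 ≤ ‖w‖ ^ 2 := by linarith [sq_nonneg ‖w - P₀ w‖]
    have h3 := Real.sqrt_le_sqrt h2
    rwa [Real.sqrt_sq (norm_nonneg _), Real.sqrt_sq (norm_nonneg _)] at h3
  have hQle : ∀ w : H, ‖w - P₀ w‖ ≤ ‖w‖ := by
    intro w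
    have h := stmt18_pyth hP₀ hP₀idem' w
    have h2 : ‖w - P₀ w‖ ^ 2 ≤ ‖w‖ ^ 2 := by linarith [sq_nonneg ‖P₀ w‖]
    have h3 := Real.sqrt_le_sqrt h2
    rwa [Real.sqrt_sq (norm_nonneg _), Real.sqrt_sq (norm_nonneg _)] at h3
  have hbound : ‖L X‖ ≤ ‖X‖ / Δ := by
    rw [hLX]
    apply ContinuousLinearMap.opNorm_le_bound _ (div_nonneg (norm_nonneg X) hΔ.le)
    intro v
    have hSv : S v = ∫ t in Set.Ioi (0:ℝ), (NormedSpace.exp ((t : ℂ) • (-H₀)) * A) v :=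
      ContinuousLinearMap.integral_apply hI1 v
    have hTv : T v = ∫ t in Set.Ioi (0:ℝ), (B * NormedSpace.exp ((t : ℂ) • (-H₀))) v :=
      ContinuousLinearMap.integral_apply hI2 v
    have hvint1 : Integrable (fun t : ℝ => (NormedSpace.exp ((t : ℂ) • (-H₀)) * A) v)
        (volume.restrict (Set.Ioi (0:ℝ))) :=
      (ContinuousLinearMap.apply ℂ H v).integrable_comp hI1
    have hvint2 : Integrable (fun t : ℝ => (B * NormedSpace.exp ((t : ℂ) • (-H₀))) v)
        (volume.restrict (Set.Ioi (0:ℝ))) :=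
      (ContinuousLinearMap.apply ℂ H v).integrable_comp hI2
    have hPAv : P₀ (A v) = 0 := by
      have := congrArg (fun M => M v) hPA
      simpa using this
    have hPvv : P₀ (v - P₀ v) = 0 := by
      have := congrArg (fun M => M v) hP₀idem'
      simp only [ContinuousLinearMap.mul_apply] at this
      simp [map_sub, this]
    -- bound on S v
    have hSvb : ‖S v‖ ≤ Δ⁻¹ * (‖X‖ * ‖P₀ v‖) := by
      rw [hSv]
      have hgint : Integrable (fun t : ℝ => Real.exp (-(Δ * t)) * (‖X‖ * ‖P₀ v‖))
          (volume.restrict (Set.Ioi (0:ℝ))) := by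
        have h0 := (exp_neg_integrableOn_Ioi 0 hΔ).mul_const (‖X‖ * ‖P₀ v‖)
        simp only [neg_mul] at h0 ⊢
        exact h0
      calc ‖∫ t in Set.Ioi (0:ℝ), (NormedSpace.exp ((t : ℂ) • (-H₀)) * A) v‖
            ≤ ∫ t in Set.Ioi (0:ℝ), Real.exp (-(Δ * t)) * (‖X‖ * ‖P₀ v‖) := ?_
        _ = Δ⁻¹ * (‖X‖ * ‖P₀ v‖) := by
              rw [integral_mul_const, stmt18_intexp hΔ]
      refine norm_integral_le_of_norm_le hgint ?_
      rw [ae_restrict_iff' measurableSet_Ioi]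
      refine ae_of_all _ fun t ht => ?_
      have h1 := stmt18_decay hH₀sa hP₀H₀ hH₀P₀ hΔ hgap (le_of_lt ht) hPAv
      have h2 : ‖A v‖ ≤ ‖X‖ * ‖P₀ v‖ := by
        have hAv : A v = X (P₀ v) - P₀ (X (P₀ v)) := by
          simp [hAdef, ContinuousLinearMap.mul_apply, ContinuousLinearMap.sub_apply]
        rw [hAv]
        calc ‖X (P₀ v) - P₀ (X (P₀ v))‖ ≤ ‖X (P₀ v)‖ := hQle _
          _ ≤ ‖X‖ * ‖P₀ v‖ := X.le_opNorm _
      calc ‖(NormedSpace.exp ((t : ℂ) • (-H₀)) * A) v‖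
          = ‖NormedSpace.exp ((t : ℂ) • (-H₀)) (A v)‖ := rfl
        _ ≤ Real.exp (-(Δ * t)) * ‖A v‖ := h1
        _ ≤ Real.exp (-(Δ * t)) * (‖X‖ * ‖P₀ v‖) :=
            mul_le_mul_of_nonneg_left h2 (Real.exp_nonneg _)
    -- bound on T v
    have hTvb : ‖T v‖ ≤ Δ⁻¹ * (‖X‖ * ‖v - P₀ v‖) := by
      rw [hTv]
      have hgint : Integrable (fun t : ℝ => Real.exp (-(Δ * t)) * (‖X‖ * ‖v - P₀ v‖))
          (volume.restrict (Set.Ioi (0:ℝ))) := by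
        have h0 := (exp_neg_integrableOn_Ioi 0 hΔ).mul_const (‖X‖ * ‖v - P₀ v‖)
        simp only [neg_mul] at h0 ⊢
        exact h0
      calc ‖∫ t in Set.Ioi (0:ℝ), (B * NormedSpace.exp ((t : ℂ) • (-H₀))) v‖
            ≤ ∫ t in Set.Ioi (0:ℝ), Real.exp (-(Δ * t)) * (‖X‖ * ‖v - P₀ v‖) := ?_
        _ = Δ⁻¹ * (‖X‖ * ‖v - P₀ v‖) := by
              rw [integral_mul_const, stmt18_intexp hΔ]
      refine norm_integral_le_of_norm_le hgint ?_
      rw [ae_restrict_iff' measurableSet_Ioi]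
      refine ae_of_all _ fun t ht => ?_
      have hd := stmt18_decay hH₀sa hP₀H₀ hH₀P₀ hΔ hgap (le_of_lt ht) hPvv
      have hEPv : P₀ (NormedSpace.exp ((t : ℂ) • (-H₀)) v) = P₀ v := by
        have := congrArg (fun M => M v) (hPE t)
        simpa using this
      have hEPv2 : NormedSpace.exp ((t : ℂ) • (-H₀)) (P₀ v) = P₀ v := by
        have := congrArg (fun M => M v) (hEP t)
        simpa using this
      have hBEv : (B * NormedSpace.exp ((t : ℂ) • (-H₀))) v
          = P₀ (X (NormedSpace.exp ((t : ℂ) • (-H₀)) (v - P₀ v))) := by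
        have h3 : NormedSpace.exp ((t : ℂ) • (-H₀)) (v - P₀ v)
            = NormedSpace.exp ((t : ℂ) • (-H₀)) v - P₀ (NormedSpace.exp ((t : ℂ) • (-H₀)) v) := by
          rw [map_sub, hEPv2, hEPv]
        rw [h3]
        simp [hBdef, ContinuousLinearMap.mul_apply, ContinuousLinearMap.sub_apply, map_sub]
      rw [hBEv]
      calc ‖P₀ (X (NormedSpace.exp ((t : ℂ) • (-H₀)) (v - P₀ v)))‖
          ≤ ‖X (NormedSpace.exp ((t : ℂ) • (-H₀)) (v - P₀ v))‖ := hPle _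
        _ ≤ ‖X‖ * ‖NormedSpace.exp ((t : ℂ) • (-H₀)) (v - P₀ v)‖ := X.le_opNorm _
        _ ≤ ‖X‖ * (Real.exp (-(Δ * t)) * ‖v - P₀ v‖) :=
            mul_le_mul_of_nonneg_left hd (norm_nonneg _)
        _ = Real.exp (-(Δ * t)) * (‖X‖ * ‖v - P₀ v‖) := by ring
    -- orthogonality
    have hPSv : P₀ (S v) = 0 := by
      rw [hSv]
      rw [← P₀.integral_comp_comm hvint1]
      have hzero : (fun t : ℝ => P₀ ((NormedSpace.exp ((t : ℂ) • (-H₀)) * A) v))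
          = fun _ : ℝ => (0 : H) := by
        funext t
        have h4 : P₀ * (NormedSpace.exp ((t : ℂ) • (-H₀)) * A) = 0 := by
          rw [← mul_assoc, hPE t, hPA]
        have := congrArg (fun M => M v) h4
        simpa using this
      rw [hzero]
      simp
    have hPTv : P₀ (T v) = T v := by
      conv_lhs => rw [hTv]
      rw [← P₀.integral_comp_comm hvint2]
      have heq : (fun t : ℝ => P₀ ((B * NormedSpace.exp ((t : ℂ) • (-H₀))) v))
          = fun t : ℝ => (B * NormedSpace.exp ((t : ℂ) • (-H₀))) v := by
        funext t
        have h4 : P₀ * (B * NormedSpace.exp ((t : ℂ) • (-H₀)))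
            = B * NormedSpace.exp ((t : ℂ) • (-H₀)) := by
          rw [← mul_assoc, hPB]
        have := congrArg (fun M => M v) h4
        simpa using this
      rw [heq, ← hTv]
    have hST : (⟪S v, T v⟫ : ℂ) = 0 := by
      calc (⟪S v, T v⟫ : ℂ) = ⟪S v, P₀ (T v)⟫ := by rw [hPTv]
        _ = ⟪S v, ContinuousLinearMap.adjoint P₀ (T v)⟫ := by rw [hP₀]
        _ = ⟪P₀ (S v), T v⟫ := ContinuousLinearMap.adjoint_inner_right P₀ _ _
        _ = 0 := by rw [hPSv, inner_zero_left]
    -- combine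
    have hsq : ‖S v - T v‖ ^ 2 = ‖S v‖ ^ 2 + ‖T v‖ ^ 2 := by
      have h5 := norm_sub_sq (𝕜 := ℂ) (S v) (T v)
      rw [hST] at h5
      simpa using h5
    have hv2 := stmt18_pyth hP₀ hP₀idem' v
    have hc : (0:ℝ) ≤ Δ⁻¹ * ‖X‖ := by positivity
    have hkey : ‖S v - T v‖ ^ 2 ≤ (‖X‖ / Δ * ‖v‖) ^ 2 := by
      have hdiv : ‖X‖ / Δ = Δ⁻¹ * ‖X‖ := by ring
      rw [hdiv]
      have s1 := pow_le_pow_left₀ (norm_nonneg (S v)) hSvb 2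
      have s2 := pow_le_pow_left₀ (norm_nonneg (T v)) hTvb 2
      have s1' : ‖S v‖ ^ 2 ≤ (Δ⁻¹ * ‖X‖) ^ 2 * ‖P₀ v‖ ^ 2 := by
        have e : (Δ⁻¹ * (‖X‖ * ‖P₀ v‖)) ^ 2 = (Δ⁻¹ * ‖X‖) ^ 2 * ‖P₀ v‖ ^ 2 := by ring
        linarith [s1, e.le, e.ge]
      have s2' : ‖T v‖ ^ 2 ≤ (Δ⁻¹ * ‖X‖) ^ 2 * ‖v - P₀ v‖ ^ 2 := by
        have e : (Δ⁻¹ * (‖X‖ * ‖v - P₀ v‖)) ^ 2 = (Δ⁻¹ * ‖X‖) ^ 2 * ‖v - P₀ v‖ ^ 2 := by ring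
        linarith [s2, e.le, e.ge]
      have hv2' : (Δ⁻¹ * ‖X‖) ^ 2 * ‖P₀ v‖ ^ 2 + (Δ⁻¹ * ‖X‖) ^ 2 * ‖v - P₀ v‖ ^ 2
          = (Δ⁻¹ * ‖X‖) ^ 2 * ‖v‖ ^ 2 := by rw [← mul_add, hv2]
      have hrhs : (Δ⁻¹ * ‖X‖ * ‖v‖) ^ 2 = (Δ⁻¹ * ‖X‖) ^ 2 * ‖v‖ ^ 2 := by ring
      rw [hsq, hrhs]
      linarith [s1', s2', hv2']
    have h6 := Real.sqrt_le_sqrt hkey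
    have h7 : Real.sqrt ((‖X‖ / Δ * ‖v‖) ^ 2) = ‖X‖ / Δ * ‖v‖ :=
      Real.sqrt_sq (by positivity)
    rw [Real.sqrt_sq (norm_nonneg _), h7] at h6
    calc ‖(S - T) v‖ = ‖S v - T v‖ := by rw [ContinuousLinearMap.sub_apply]
      _ ≤ ‖X‖ / Δ * ‖v‖ := h6
  -- commutator equality
  have hHS : H₀ * S = A := by
    have h1 := (ContinuousLinearMap.mul ℂ (H →L[ℂ] H) H₀).integral_comp_comm hI1
    have h2 : (fun t : ℝ => H₀ * (NormedSpace.exp ((t : ℂ) • (-H₀)) * A))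
        = (fun t : ℝ => NormedSpace.exp ((t : ℂ) • (-H₀)) * (H₀ * A)) :=
      funext fun t => by rw [← mul_assoc, ← hcommE t, mul_assoc]
    calc H₀ * S = ∫ t in Set.Ioi (0:ℝ), H₀ * (NormedSpace.exp ((t : ℂ) • (-H₀)) * A) :=
          h1.symm
      _ = ∫ t in Set.Ioi (0:ℝ), NormedSpace.exp ((t : ℂ) • (-H₀)) * (H₀ * A) := by rw [h2]
      _ = A := stmt18_ftcL hH₀sa hP₀H₀ hH₀P₀ hΔ hgap A hPA
  have hSH : S * H₀ = 0 := by
    have h1 := ((ContinuousLinearMap.mul ℂ (H →L[ℂ] H)).flip H₀).integral_comp_comm hI1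
    have h2 : (fun t : ℝ => (NormedSpace.exp ((t : ℂ) • (-H₀)) * A) * H₀)
        = (fun t : ℝ => (0 : H →L[ℂ] H)) :=
      funext fun t => by rw [mul_assoc, hAH, mul_zero]
    calc S * H₀ = ∫ t in Set.Ioi (0:ℝ), (NormedSpace.exp ((t : ℂ) • (-H₀)) * A) * H₀ :=
          h1.symm
      _ = ∫ t in Set.Ioi (0:ℝ), (0 : H →L[ℂ] H) := by rw [h2]
      _ = 0 := integral_zero _ _
  have hHT : H₀ * T = 0 := by
    have h1 := (ContinuousLinearMap.mul ℂ (H →L[ℂ] H) H₀).integral_comp_comm hI2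
    have h2 : (fun t : ℝ => H₀ * (B * NormedSpace.exp ((t : ℂ) • (-H₀))))
        = (fun t : ℝ => (0 : H →L[ℂ] H)) :=
      funext fun t => by rw [← mul_assoc, hHB, zero_mul]
    calc H₀ * T = ∫ t in Set.Ioi (0:ℝ), H₀ * (B * NormedSpace.exp ((t : ℂ) • (-H₀))) :=
          h1.symm
      _ = ∫ t in Set.Ioi (0:ℝ), (0 : H →L[ℂ] H) := by rw [h2]
      _ = 0 := integral_zero _ _
  have hTH : T * H₀ = B := by
    have h1 := ((ContinuousLinearMap.mul ℂ (H →L[ℂ] H)).flip H₀).integral_comp_comm hI2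
    have h2 : (fun t : ℝ => (B * NormedSpace.exp ((t : ℂ) • (-H₀))) * H₀)
        = (fun t : ℝ => (B * H₀) * NormedSpace.exp ((t : ℂ) • (-H₀))) :=
      funext fun t => by rw [mul_assoc, hcommE t, ← mul_assoc]
    calc T * H₀ = ∫ t in Set.Ioi (0:ℝ), (B * NormedSpace.exp ((t : ℂ) • (-H₀))) * H₀ :=
          h1.symm
      _ = ∫ t in Set.Ioi (0:ℝ), (B * H₀) * NormedSpace.exp ((t : ℂ) • (-H₀)) := by rw [h2]
      _ = B := stmt18_ftcR hH₀sa hP₀ hP₀idem' hP₀H₀ hH₀P₀ hΔ hgap B hBP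
  have hfinal : H₀ * (S - T) - (S - T) * H₀ = A + B := by
    rw [mul_sub, sub_mul, hHS, hHT, hSH, hTH]
    abel
  exact ⟨by simp only [hE]; exact hI1, by simp only [hE]; exact hI2, hbound,
    by rw [hLY, hLX]; exact hfinal.symm, hLY.trans (add_comm A B)⟩
end
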